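/- arXiv:0704.1933 — 4 statements merged into one kernel-verified Lean document; each statement's English description precedes it below -/
import Mathlib

section
/- Let N, n ∈ ℕ, let ξ₀, ξ, C⁻, C⁺, μ⁻, μ⁺, α₁,…,α_n be real numbers and a₁,…,a_n, A₁,…,A_n ∈ ℂ. Let R > 0 and let f be holomorphic on {z ∈ ℂ : |z| > R} with f(z) − z → 0 as |z| → ∞ (hydrodynamic normalization). Suppose there is R' ≥ R such that for all z with |z| > R' one has f'(z) ≠ 0, f(z) ∉ {ξ₀, a₁,…,a_n}, z ∉ {ξ, C⁻, C⁺, A₁,…,A_n}, and the identity 2/(z−ξ) + μ⁻/(z−C⁻) + μ⁺/(z−C⁺) + Σ_{j=1}^{n} α_j/(z−A_j) = (N/(f(z)−ξ₀) + Σ_{j=1}^{n} α_j/(f(z)−a_j))·f'(z) + 2·f''(z)/f'(z). Then 2 + μ⁻ + μ⁺ = N, and 2ξ = −μ⁻·C⁻ − μ⁺·C⁺ − Σ_{j=1}^{n} α_j·A_j + Σ₀, where Σ₀ = N·ξ₀ + Σ_{j=1}^{n} α_j·a_j. (Formula (3) of Theorem 1.2, obtained by matching the 1/z and 1/z² coefficients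 at ∞.) -/
open Complex Filter Metric

noncomputable def lC : Filter ℂ := comap (fun z : ℂ => ‖z‖) atTop

lemma lC_abs : Tendsto (fun z => ‖z‖) lC atTop := tendsto_comap

lemma lC_neBot : lC.NeBot := by
  have h1 : Tendsto (fun x : ℝ => (x : ℂ)) atTop lC := by
    rw [lC, tendsto_comap_iff]
    have : ((fun z : ℂ => ‖z‖) ∘ fun x : ℝ => (x : ℂ)) = fun x : ℝ => |x| := by
      funext x; simp [Function.comp, Complex.norm_real, Real.norm_eq_abs]
    rw [this]
    exact tendsto_abs_atTop_atTop
  exact neBot_of_le h1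

lemma lC_inv0 : Tendsto (fun z : ℂ => z⁻¹) lC (nhds 0) := by
  rw [tendsto_zero_iff_norm_tendsto_zero]
  simp only [norm_inv]
  exact (tendsto_inv_atTop_zero (𝕜 := ℝ)).comp lC_abs

lemma lC_gt (M : ℝ) : ∀ᶠ z in lC, M < ‖z‖ := lC_abs.eventually_gt_atTop M

lemma lC_ne0 : ∀ᶠ z in lC, z ≠ 0 :=
  (lC_gt 0).mono fun z hz h0 => by simp [h0] at hz

lemma lC_ne (c : ℂ) : ∀ᶠ z in lC, z ≠ c :=
  (lC_gt ‖c‖).mono fun z hz h0 => by simp [h0] at hz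

/-- `z/(z-c) → 1`. -/
lemma lC_t5id (c : ℂ) : Tendsto (fun z : ℂ => z * (z - c)⁻¹) lC (nhds 1) := by
  have h1 : Tendsto (fun z : ℂ => (z - c) * z⁻¹) lC (nhds 1) := by
    have : Tendsto (fun z : ℂ => 1 - c * z⁻¹) lC (nhds (1 - c * 0)) :=
      tendsto_const_nhds.sub (tendsto_const_nhds.mul lC_inv0)
    rw [mul_zero, sub_zero] at this
    refine this.congr' ?_
    filter_upwards [lC_ne0] with z hz
    field_simp
  have := h1.inv₀ one_ne_zero
  rw [inv_one] at this
  exact this.congr fun z => by rw [mul_inv, inv_inv, mul_comm]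

/-- `z(z/(z-c) - 1) → c`. -/
lemma lC_t6 (c : ℂ) : Tendsto (fun z : ℂ => z * (z * (z - c)⁻¹ - 1)) lC (nhds c) := by
  have h1 : Tendsto (fun z : ℂ => c * (z * (z - c)⁻¹)) lC (nhds (c * 1)) :=
    tendsto_const_nhds.mul (lC_t5id c)
  rw [mul_one] at h1
  refine h1.congr' ?_
  filter_upwards [lC_ne c] with z hz
  have h : z - c ≠ 0 := sub_ne_zero.mpr hz
  field_simp
  ring

lemma key_asymp (R : ℝ) (hR : 0 < R) (f : ℂ → ℂ)
    (hf : ∀ z : ℂ, R < ‖z‖ → DifferentiableAt ℂ f z)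
    (hnorm : Tendsto (fun z => f z - z) lC (nhds 0)) :
    Tendsto (fun z => z * (deriv f z - 1)) lC (nhds 0) ∧
    Tendsto (fun z => z ^ 2 * deriv (deriv f) z) lC (nhds 0) ∧
    Tendsto (deriv f) lC (nhds 1) := by
  classical
  set F : ℂ → ℂ := fun w => if w = 0 then 0 else f w⁻¹ - w⁻¹ with hFdef
  -- differentiability of F away from 0
  have habs_inv : ∀ w : ℂ, w ≠ 0 → ‖w‖ < R⁻¹ → R < ‖w⁻¹‖ := by
    intro w hw hwR
    rw [norm_inv]
    have hw0 : 0 < ‖w‖ := norm_pos_iff.mpr hw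
    have := (inv_lt_inv₀ (by positivity) hw0).mpr hwR
    rwa [inv_inv] at this
  have hFeq_punct : ∀ᶠ w in nhdsWithin (0:ℂ) {(0:ℂ)}ᶜ, F w = f w⁻¹ - w⁻¹ := by
    filter_upwards [self_mem_nhdsWithin] with w hw
    simp [hFdef, Set.mem_compl_iff, Set.mem_singleton_iff] at hw ⊢
    simp [hw]
  have hFdiff : ∀ w : ℂ, w ≠ 0 → ‖w‖ < R⁻¹ → DifferentiableAt ℂ F w := by
    intro w hw hwR
    have hg : DifferentiableAt ℂ (fun w : ℂ => f w⁻¹ - w⁻¹) w := by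
      have h1 : DifferentiableAt ℂ (fun w : ℂ => f w⁻¹) w :=
        (hf _ (habs_inv w hw hwR)).comp w (differentiableAt_inv hw)
      exact h1.sub (differentiableAt_inv hw)
    refine hg.congr_of_eventuallyEq ?_
    filter_upwards [isOpen_compl_singleton.mem_nhds (by simpa using hw)] with v hv
    simp only [Set.mem_compl_iff, Set.mem_singleton_iff] at hv
    simp [hFdef, hv]
  -- continuity of F at 0
  have hinv_l : Tendsto (fun w : ℂ => w⁻¹) (nhdsWithin (0:ℂ) {(0:ℂ)}ᶜ) lC := by
    rw [lC, tendsto_comap_iff]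
    have habs : Tendsto (fun w : ℂ => ‖w‖) (nhdsWithin (0:ℂ) {(0:ℂ)}ᶜ)
        (nhdsWithin (0:ℝ) (Set.Ioi 0)) := by
      rw [tendsto_nhdsWithin_iff]
      constructor
      · have := (continuous_norm.tendsto (0:ℂ))
        simpa using this.mono_left nhdsWithin_le_nhds
      · filter_upwards [self_mem_nhdsWithin] with w hw
        simp only [Set.mem_compl_iff, Set.mem_singleton_iff] at hw
        simpa [Set.mem_Ioi, norm_pos_iff] using hw
    have : Tendsto (fun w : ℂ => (‖w‖)⁻¹) (nhdsWithin (0:ℂ) {(0:ℂ)}ᶜ) atTop :=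
      tendsto_inv_nhdsGT_zero.comp habs
    refine this.congr fun w => ?_
    simp [Function.comp, norm_inv]
  have hFcont : ContinuousAt F 0 := by
    rw [← continuousWithinAt_compl_self]
    have hF0 : F 0 = 0 := by simp [hFdef]
    unfold ContinuousWithinAt
    rw [hF0]
    refine (hnorm.comp hinv_l).congr' ?_
    filter_upwards [hFeq_punct] with w hw
    simp [Function.comp, hw]
  -- analyticity
  have hFanal : AnalyticAt ℂ F 0 := by
    refine Complex.analyticAt_of_differentiable_on_punctured_nhds_of_continuousAt ?_ hFcont
    have hball : ∀ᶠ w in nhdsWithin (0:ℂ) {(0:ℂ)}ᶜ, w ∈ ball (0:ℂ) R⁻¹ :=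
      mem_nhdsWithin_of_mem_nhds (ball_mem_nhds _ (by positivity))
    filter_upwards [hball, self_mem_nhdsWithin] with w hw hw0
    refine hFdiff w (by simpa using hw0) ?_
    simpa [mem_ball, Complex.dist_eq] using hw
  obtain ⟨ε, hε, hεball⟩ : ∃ ε > 0, ∀ w ∈ ball (0:ℂ) ε, AnalyticAt ℂ F w := by
    have := hFanal.eventually_analyticAt
    rw [Metric.eventually_nhds_iff_ball] at this
    exact this
  set ε0 : ℝ := min ε R⁻¹ with hε0def
  have hε0 : 0 < ε0 := lt_min hε (by positivity)
  have hAn : AnalyticOnNhd ℂ F (ball (0:ℂ) ε0) := fun w hw =>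
    hεball w (ball_subset_ball (min_le_left _ _) hw)
  have hAn' : AnalyticOnNhd ℂ (deriv F) (ball (0:ℂ) ε0) := hAn.deriv
  have hAn'' : AnalyticOnNhd ℂ (deriv (deriv F)) (ball (0:ℂ) ε0) := hAn'.deriv
  have h0mem : (0:ℂ) ∈ ball (0:ℂ) ε0 := by simpa using hε0
  have hc1 : ContinuousAt (deriv F) 0 := (hAn' 0 h0mem).continuousAt
  have hc2 : ContinuousAt (deriv (deriv F)) 0 := (hAn'' 0 h0mem).continuousAt
  -- the relation f z = z + F z⁻¹ for |z| > R
  have hfeq : ∀ z : ℂ, R < ‖z‖ → f z = z + F z⁻¹ := by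
    intro z hz
    have hz0 : z ≠ 0 := by
      intro h; rw [h] at hz; simp at hz; linarith
    have hzi : z⁻¹ ≠ 0 := inv_ne_zero hz0
    simp [hFdef, hzi, inv_inv]
  set δ : ℝ := max (max R 1) ε0⁻¹ with hδdef
  have hδball : ∀ z : ℂ, δ < ‖z‖ → z⁻¹ ∈ ball (0:ℂ) ε0 := by
    intro z hz
    have hz0 : 0 < ‖z‖ := lt_of_lt_of_le (by positivity) (le_of_lt (lt_of_le_of_lt (le_max_right _ _) hz))
    have h1 : ε0⁻¹ < ‖z‖ := lt_of_le_of_lt (le_max_right _ _) hz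
    have : (‖z‖)⁻¹ < ε0 := by
      have := (inv_lt_inv₀ hz0 (by positivity)).mpr h1
      rwa [inv_inv] at this
    simpa [mem_ball, Complex.dist_eq, norm_inv] using this
  have hδR : ∀ z : ℂ, δ < ‖z‖ → R < ‖z‖ := fun z hz =>
    lt_of_le_of_lt (le_trans (le_max_left _ _) (le_max_left _ _)) hz
  have hδ0 : ∀ z : ℂ, δ < ‖z‖ → z ≠ 0 := by
    intro z hz h0
    rw [h0] at hz
    simp at hz
    have : (1:ℝ) ≤ δ := le_trans (le_max_right _ _) (le_max_left _ _)
    linarith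
  -- first derivative
  have hD1 : ∀ z : ℂ, δ < ‖z‖ →
      HasDerivAt f (1 - deriv F z⁻¹ * (z ^ 2)⁻¹) z := by
    intro z hz
    have hz0 := hδ0 z hz
    have h1 : HasDerivAt (fun w : ℂ => w⁻¹) (-(z ^ 2)⁻¹) z := hasDerivAt_inv hz0
    have h2 : HasDerivAt F (deriv F z⁻¹) z⁻¹ :=
      ((hAn _ (hδball z hz)).differentiableAt).hasDerivAt
    have h3 := h2.comp z h1
    have h4 := (hasDerivAt_id z).add h3
    have h5 : f =ᶠ[nhds z] fun w => w + F w⁻¹ := by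
      filter_upwards [(isOpen_lt continuous_const continuous_norm).mem_nhds
        (hδR z hz)] with w hw
      exact hfeq w hw
    have h6 := h4.congr_of_eventuallyEq h5
    refine h6.congr_deriv ?_
    ring
  have hderivf : ∀ z : ℂ, δ < ‖z‖ →
      deriv f z = 1 - deriv F z⁻¹ * (z ^ 2)⁻¹ := fun z hz => (hD1 z hz).deriv
  -- second derivative
  have hD2 : ∀ z : ℂ, δ < ‖z‖ →
      deriv (deriv f) z =
        -(deriv (deriv F) z⁻¹ * -(z ^ 2)⁻¹ * (z ^ 2)⁻¹ +
          deriv F z⁻¹ * (-(2 * z ^ 1) / (z ^ 2) ^ 2)) := by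
    intro z hz
    have hz0 := hδ0 z hz
    have h1 : HasDerivAt (fun w : ℂ => w⁻¹) (-(z ^ 2)⁻¹) z := hasDerivAt_inv hz0
    have h2 : HasDerivAt (deriv F) (deriv (deriv F) z⁻¹) z⁻¹ :=
      ((hAn' _ (hδball z hz)).differentiableAt).hasDerivAt
    have hg := h2.comp z h1
    have hpow : HasDerivAt (fun w : ℂ => w ^ 2) ((2:ℕ) * z ^ 1) z := by
      simpa using hasDerivAt_pow 2 z
    have hsqinv : HasDerivAt (fun w : ℂ => (w ^ 2)⁻¹) (-((2:ℕ) * z ^ 1) / (z ^ 2) ^ 2) z :=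
      hpow.inv (pow_ne_zero 2 hz0)
    have hmul := hg.mul hsqinv
    have htotal := (hasDerivAt_const z (1:ℂ)).sub hmul
    have h5 : deriv f =ᶠ[nhds z] fun w => 1 - deriv F w⁻¹ * (w ^ 2)⁻¹ := by
      filter_upwards [(isOpen_lt continuous_const continuous_norm).mem_nhds hz] with w hw
      exact hderivf w hw
    have h6 := htotal.congr_of_eventuallyEq h5
    have := h6.deriv
    rw [this]
    simp only [Function.comp_apply]
    push_cast
    ring
  -- eventual facts along lC
  have hevδ : ∀ᶠ z in lC, δ < ‖z‖ := lC_gt δ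
  have tF' : Tendsto (fun z : ℂ => deriv F z⁻¹) lC (nhds (deriv F 0)) :=
    hc1.tendsto.comp lC_inv0
  have tF'' : Tendsto (fun z : ℂ => deriv (deriv F) z⁻¹) lC (nhds (deriv (deriv F) 0)) :=
    hc2.tendsto.comp lC_inv0
  refine ⟨?_, ?_, ?_⟩
  · -- z (f' - 1) → 0
    have h1 : Tendsto (fun z : ℂ => -(deriv F z⁻¹ * z⁻¹)) lC (nhds (-(deriv F 0 * 0))) :=
      (tF'.mul lC_inv0).neg
    rw [mul_zero, neg_zero] at h1
    refine h1.congr' ?_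
    filter_upwards [hevδ] with z hz
    have hz0 := hδ0 z hz
    rw [hderivf z hz]
    field_simp
    ring
  · -- z² f'' → 0
    have h1 : Tendsto (fun z : ℂ => deriv (deriv F) z⁻¹ * (z⁻¹ * z⁻¹) +
        2 * deriv F z⁻¹ * z⁻¹) lC
        (nhds (deriv (deriv F) 0 * (0 * 0) + 2 * deriv F 0 * 0)) :=
      (tF''.mul (lC_inv0.mul lC_inv0)).add ((tendsto_const_nhds.mul tF').mul lC_inv0)
    simp only [mul_zero, zero_mul, add_zero] at h1
    refine h1.congr' ?_
    filter_upwards [hevδ] with z hz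
    have hz0 := hδ0 z hz
    rw [hD2 z hz]
    field_simp
    ring
  · -- f' → 1
    have h1 : Tendsto (fun z : ℂ => 1 - deriv F z⁻¹ * (z⁻¹ * z⁻¹)) lC
        (nhds (1 - deriv F 0 * (0 * 0))) :=
      tendsto_const_nhds.sub (tF'.mul (lC_inv0.mul lC_inv0))
    simp only [mul_zero, sub_zero] at h1
    refine h1.congr' ?_
    filter_upwards [hevδ] with z hz
    rw [hderivf z hz, sq, mul_inv]

section fLimits
variable {f : ℂ → ℂ} (hnorm : Tendsto (fun z => f z - z) lC (nhds 0))
include hnorm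

/-- `(f z - c)/z → 1`. -/
lemma lC_t4 (c : ℂ) : Tendsto (fun z : ℂ => (f z - c) * z⁻¹) lC (nhds 1) := by
  have h : Tendsto (fun z : ℂ => (f z - z) * z⁻¹ + (1 - c * z⁻¹)) lC
      (nhds (0 * 0 + (1 - c * 0))) :=
    (hnorm.mul lC_inv0).add (tendsto_const_nhds.sub (tendsto_const_nhds.mul lC_inv0))
  simp only [zero_mul, mul_zero, sub_zero, zero_add] at h
  refine h.congr' ?_
  filter_upwards [lC_ne0] with z hz
  field_simp
  ring

/-- `z/(f z - c) → 1`. -/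
lemma lC_t5 (c : ℂ) : Tendsto (fun z : ℂ => z * (f z - c)⁻¹) lC (nhds 1) := by
  have h := (lC_t4 hnorm c).inv₀ one_ne_zero
  rw [inv_one] at h
  exact h.congr fun z => by rw [mul_inv, inv_inv, mul_comm]

/-- `z(z f'(z)/(f z - c) - 1) → c`. -/
lemma lC_t7 (c : ℂ) (hc : ∀ᶠ z in lC, f z ≠ c)
    (ht1 : Tendsto (fun z => z * (deriv f z - 1)) lC (nhds 0)) :
    Tendsto (fun z : ℂ => z * (z * (f z - c)⁻¹ * deriv f z - 1)) lC (nhds c) := by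
  have h : Tendsto (fun z : ℂ => (z * (deriv f z - 1) - (f z - z) + c) * (z * (f z - c)⁻¹))
      lC (nhds ((0 - 0 + c) * 1)) :=
    ((ht1.sub hnorm).add tendsto_const_nhds).mul (lC_t5 hnorm c)
  simp only [sub_zero, zero_add, mul_one, zero_sub, neg_zero] at h
  refine h.congr' ?_
  filter_upwards [hc] with z hz
  have h0 : f z - c ≠ 0 := sub_ne_zero.mpr hz
  field_simp
  ring

end fLimits


/-- formula (3) of Theorem 1.2, in logarithmic-derivative form.
If `f` is holomorphic on `{|z| > R}` with hydrodynamic normalization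
`f(z) - z → 0` as `|z| → ∞`, and for all large `|z|` the logarithmic derivative of
`Q(f z)·f'(z)² = R'(z-ξ)²(z-C⁻)^{μ⁻}(z-C⁺)^{μ⁺}∏(z-A_j)^{α_j}` identity
`2/(z-ξ) + μ⁻/(z-C⁻) + μ⁺/(z-C⁺) + Σ α_j/(z-A_j)
  = (N/(f z-ξ₀) + Σ α_j/(f z-a_j))·f'(z) + 2 f''(z)/f'(z)`
holds, then matching the `1/z` and `1/z²` coefficients at `∞` gives
`2 + μ⁻ + μ⁺ = N` and `2ξ = -μ⁻C⁻ - μ⁺C⁺ - Σ α_j A_j + Σ₀` with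
`Σ₀ = Nξ₀ + Σ α_j a_j`. -/
theorem stmt_4 (N n : ℕ) (ξ₀ ξ Cm Cp μm μp : ℝ) (α : Fin n → ℝ)
    (a A : Fin n → ℂ) (R : ℝ) (hR : 0 < R) (f : ℂ → ℂ)
    (hf : ∀ z : ℂ, R < ‖z‖ → DifferentiableAt ℂ f z)
    (hnorm : Tendsto (fun z => f z - z) (comap (fun z : ℂ => ‖z‖) atTop) (nhds 0))
    (R' : ℝ) (hR' : R ≤ R')
    (hid : ∀ z : ℂ, R' < ‖z‖ →
      deriv f z ≠ 0 ∧ f z ≠ (ξ₀ : ℂ) ∧ (∀ j, f z ≠ a j) ∧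
      z ≠ (ξ : ℂ) ∧ z ≠ (Cm : ℂ) ∧ z ≠ (Cp : ℂ) ∧ (∀ j, z ≠ A j) ∧
      2 / (z - (ξ : ℂ)) + (μm : ℂ) / (z - (Cm : ℂ)) + (μp : ℂ) / (z - (Cp : ℂ))
          + ∑ j, (α j : ℂ) / (z - A j)
        = ((N : ℂ) / (f z - (ξ₀ : ℂ)) + ∑ j, (α j : ℂ) / (f z - a j)) * deriv f z
          + 2 * deriv (deriv f) z / deriv f z) :
    2 + μm + μp = (N : ℝ) ∧
    ((2 * ξ : ℝ) : ℂ)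
      = -(μm : ℂ) * (Cm : ℂ) - (μp : ℂ) * (Cp : ℂ) - (∑ j, (α j : ℂ) * A j)
        + ((N : ℂ) * (ξ₀ : ℂ) + ∑ j, (α j : ℂ) * a j) := by

  classical
  haveI : lC.NeBot := lC_neBot
  have hnorm' : Tendsto (fun z => f z - z) lC (nhds 0) := hnorm
  obtain ⟨t1, t2, t3⟩ := key_asymp R hR f hf hnorm'
  have t8 : Tendsto (fun z => (deriv f z)⁻¹) lC (nhds 1) := by
    simpa using t3.inv₀ one_ne_zero
  have hev := (lC_gt R').mono hid
  have hfξ₀ : ∀ᶠ z in lC, f z ≠ (ξ₀ : ℂ) := hev.mono fun z h => h.2.1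
  have hfa : ∀ j, ∀ᶠ z in lC, f z ≠ a j := fun j => hev.mono fun z h => h.2.2.1 j
  set S : ℂ := ∑ j, (α j : ℂ) with hSdef
  -- the two function shapes
  set G : ℂ → ℂ := fun z => z * (2 / (z - (ξ : ℂ)) + (μm : ℂ) / (z - (Cm : ℂ))
      + (μp : ℂ) / (z - (Cp : ℂ)) + ∑ j, (α j : ℂ) / (z - A j)) with hGdef
  set G' : ℂ → ℂ := fun z => z * (((N : ℂ) / (f z - (ξ₀ : ℂ))
      + ∑ j, (α j : ℂ) / (f z - a j)) * deriv f z
      + 2 * deriv (deriv f) z / deriv f z) with hG'def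
  have hGG' : G =ᶠ[lC] G' := by
    filter_upwards [hev] with z h
    simp only [hGdef, hG'def]
    rw [h.2.2.2.2.2.2.2]
  -- first-order limits
  have limL1 : Tendsto G lC (nhds (2 + (μm : ℂ) + μp + S)) := by
    have h : Tendsto (fun z : ℂ => 2 * (z * (z - (ξ:ℂ))⁻¹) + (μm:ℂ) * (z * (z - (Cm:ℂ))⁻¹)
        + (μp:ℂ) * (z * (z - (Cp:ℂ))⁻¹) + ∑ j, (α j : ℂ) * (z * (z - A j)⁻¹)) lC
        (nhds (2 * 1 + (μm:ℂ) * 1 + (μp:ℂ) * 1 + ∑ j, (α j : ℂ) * 1)) :=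
      ((((tendsto_const_nhds.mul (lC_t5id _)).add
        (tendsto_const_nhds.mul (lC_t5id _))).add
        (tendsto_const_nhds.mul (lC_t5id _))).add
        (tendsto_finset_sum _ fun j _ => tendsto_const_nhds.mul (lC_t5id _)))
    simp only [mul_one] at h
    refine h.congr fun z => ?_
    simp only [hGdef, div_eq_mul_inv]
    rw [show (∑ j, (α j:ℂ) * (z * (z - A j)⁻¹)) = z * ∑ j, (α j:ℂ) * (z - A j)⁻¹ by
      rw [Finset.mul_sum]; exact Finset.sum_congr rfl fun j _ => by ring]
    ring
  have limR1 : Tendsto G' lC (nhds ((N : ℂ) + S)) := by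
    have h : Tendsto (fun z : ℂ => ((N:ℂ) * (z * (f z - (ξ₀:ℂ))⁻¹)) * deriv f z
        + (∑ j, (α j : ℂ) * (z * (f z - a j)⁻¹) * deriv f z)
        + 2 * (z ^ 2 * deriv (deriv f) z) * z⁻¹ * (deriv f z)⁻¹) lC
        (nhds (((N:ℂ) * 1) * 1 + (∑ j, (α j : ℂ) * 1 * 1) + 2 * 0 * 0 * 1)) := by
      refine Tendsto.add (Tendsto.add ?_ ?_) ?_
      · exact (tendsto_const_nhds.mul (lC_t5 hnorm' _)).mul t3
      · exact tendsto_finset_sum _ fun j _ =>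
          (tendsto_const_nhds.mul (lC_t5 hnorm' _)).mul t3
      · exact ((tendsto_const_nhds.mul t2).mul lC_inv0).mul t8
    simp only [mul_one, mul_zero, zero_mul, add_zero] at h
    refine h.congr' ?_
    filter_upwards [lC_ne0] with z hz
    have hzz : z ^ 2 * z⁻¹ = z := by
      rw [sq, mul_assoc, mul_inv_cancel₀ hz, mul_one]
    simp only [hG'def, div_eq_mul_inv]
    rw [show (∑ j, (α j:ℂ) * (z * (f z - a j)⁻¹) * deriv f z)
        = z * (∑ j, (α j:ℂ) * (f z - a j)⁻¹) * deriv f z by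
      rw [Finset.mul_sum, Finset.sum_mul]
      exact Finset.sum_congr rfl fun j _ => by ring]
    linear_combination 2 * deriv (deriv f) z * (deriv f z)⁻¹ * hzz
  have eq1 : 2 + (μm:ℂ) + μp + S = (N : ℂ) + S :=
    tendsto_nhds_unique limL1 (limR1.congr' hGG'.symm)
  have part1C : 2 + (μm:ℂ) + μp = (N : ℂ) := by
    have := eq1
    linear_combination this
  have part1 : 2 + μm + μp = (N : ℝ) := by exact_mod_cast part1C
  -- second-order limits
  have limL2 : Tendsto (fun z => z * (G z - (2 + (μm:ℂ) + μp + S))) lC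
      (nhds (2 * (ξ:ℂ) + (μm:ℂ) * Cm + (μp:ℂ) * Cp + ∑ j, (α j : ℂ) * A j)) := by
    have h : Tendsto (fun z : ℂ => 2 * (z * (z * (z - (ξ:ℂ))⁻¹ - 1))
        + (μm:ℂ) * (z * (z * (z - (Cm:ℂ))⁻¹ - 1))
        + (μp:ℂ) * (z * (z * (z - (Cp:ℂ))⁻¹ - 1))
        + ∑ j, (α j : ℂ) * (z * (z * (z - A j)⁻¹ - 1))) lC
        (nhds (2 * (ξ:ℂ) + (μm:ℂ) * Cm + (μp:ℂ) * Cp + ∑ j, (α j : ℂ) * A j)) :=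
      ((((tendsto_const_nhds.mul (lC_t6 _)).add
        (tendsto_const_nhds.mul (lC_t6 _))).add
        (tendsto_const_nhds.mul (lC_t6 _))).add
        (tendsto_finset_sum _ fun j _ => tendsto_const_nhds.mul (lC_t6 _)))
    refine h.congr fun z => ?_
    simp only [hGdef, div_eq_mul_inv, hSdef]
    rw [show (∑ j, (α j:ℂ) * (z * (z * (z - A j)⁻¹ - 1)))
        = z * (z * ∑ j, (α j:ℂ) * (z - A j)⁻¹) - z * ∑ j, (α j:ℂ) by
      simp only [Finset.mul_sum, Finset.sum_mul]
      rw [← Finset.sum_sub_distrib]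
      exact Finset.sum_congr rfl fun j _ => by ring]
    ring
  have limR2 : Tendsto (fun z => z * (G' z - ((N:ℂ) + S))) lC
      (nhds ((N:ℂ) * (ξ₀:ℂ) + ∑ j, (α j : ℂ) * a j)) := by
    have h : Tendsto (fun z : ℂ => (N:ℂ) * (z * (z * (f z - (ξ₀:ℂ))⁻¹ * deriv f z - 1))
        + (∑ j, (α j : ℂ) * (z * (z * (f z - a j)⁻¹ * deriv f z - 1)))
        + 2 * (z ^ 2 * deriv (deriv f) z) * (deriv f z)⁻¹) lC
        (nhds ((N:ℂ) * (ξ₀:ℂ) + (∑ j, (α j : ℂ) * a j) + 2 * 0 * 1)) := by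
      refine Tendsto.add (Tendsto.add ?_ ?_) ?_
      · exact tendsto_const_nhds.mul (lC_t7 hnorm' _ hfξ₀ t1)
      · exact tendsto_finset_sum _ fun j _ =>
          tendsto_const_nhds.mul (lC_t7 hnorm' _ (hfa j) t1)
      · exact (tendsto_const_nhds.mul t2).mul t8
    simp only [mul_zero, zero_mul, mul_one, add_zero] at h
    refine h.congr fun z => ?_
    simp only [hG'def, div_eq_mul_inv, hSdef]
    rw [show (∑ j, (α j:ℂ) * (z * (z * (f z - a j)⁻¹ * deriv f z - 1)))
        = z * (z * ((∑ j, (α j:ℂ) * (f z - a j)⁻¹) * deriv f z)) - z * ∑ j, (α j:ℂ) by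
      simp only [Finset.mul_sum, Finset.sum_mul]
      rw [← Finset.sum_sub_distrib]
      exact Finset.sum_congr rfl fun j _ => by ring]
    ring
  have hHev : (fun z => z * (G z - (2 + (μm:ℂ) + μp + S)))
      =ᶠ[lC] (fun z => z * (G' z - ((N:ℂ) + S))) := by
    filter_upwards [hGG'] with z hz
    rw [hz, eq1]
  have eq2 : 2 * (ξ:ℂ) + (μm:ℂ) * Cm + (μp:ℂ) * Cp + (∑ j, (α j : ℂ) * A j)
      = (N:ℂ) * (ξ₀:ℂ) + ∑ j, (α j : ℂ) * a j :=
    tendsto_nhds_unique limL2 (limR2.congr' hHev.symm)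
  refine ⟨part1, ?_⟩
  push_cast
  linear_combination eq2
end

section
/- Let T > 0, t₀ ∈ (0,T), let ξ : (0,T) → ℝ be differentiable, let U ⊆ ℂ be an open neighborhood of ξ(t₀), and let f : (0,T) × U → ℂ be such that z ↦ f_t(z) is holomorphic on U for each t, the time derivative ∂_t f_t(z) exists and is jointly continuous on (0,T) × U, and ∂_t f_t(z) = −2·f_t'(z)/(z − ξ(t)) for all t and all z ∈ U with z ≠ ξ(t). Define γ(t) = f_t(ξ(t)) and assume f'_{t₀}(ξ(t₀)) = 0. Let Q be holomorphic at γ(t₀) with Q(γ(t₀)) ≠ 0, and let Φ := lim_{z→ξ(t₀)} Q(f_{t₀}(z))·f_{t₀}'(z)²/(z − ξ(t₀))² (this limit exists and equals Q(γ(t₀))·f''_{t₀}(ξ(t₀))²). Then γ is differentiable at t₀, γ'(t₀) = −2·f''_{t₀}(ξ(t₀)), and Q(γ(t₀))·γ'(t₀)² = 4·Φ. (Theorem 1.3 in squared, branch-free form: the tip of the slit moves with γ̇(t) = −2√(Φ_t(ξ(t))/Q(γ(t))), where Φ_t(z) = Q(f_t(z))f_t'(z)²/(z−ξ(t))².) 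-/
open Complex
open Filter Asymptotics

/-- Theorem 1.3 in squared, branch-free form: motion of the tip of
the slit.  Let `f_t` be holomorphic in `z` on a neighborhood `U` of `ξ(t₀)`, with
jointly continuous time derivative `F t z` satisfying the chordal Loewner equation
`∂_t f_t(z) = -2 f_t'(z)/(z-ξ(t))` for `z ≠ ξ(t)`, let `γ(t) = f_t(ξ(t))` and assume
`f_{t₀}'(ξ(t₀)) = 0`.  If `Q` is holomorphic and nonzero at `γ(t₀)` and
`Φ = lim_{z→ξ(t₀)} Q(f_{t₀}(z))·f_{t₀}'(z)²/(z-ξ(t₀))²`, then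
`Φ = Q(γ(t₀))·f_{t₀}''(ξ(t₀))²`, `γ` is differentiable at `t₀` with
`γ'(t₀) = -2 f_{t₀}''(ξ(t₀))`, and `Q(γ(t₀))·γ'(t₀)² = 4Φ`. -/
theorem stmt_8 (T : ℝ) (hT : 0 < T) (t₀ : ℝ) (ht₀ : t₀ ∈ Set.Ioo 0 T)
    (ξ : ℝ → ℝ) (hξ : ∀ t ∈ Set.Ioo 0 T, DifferentiableAt ℝ ξ t)
    (U : Set ℂ) (hU : IsOpen U) (hmem : ((ξ t₀ : ℝ) : ℂ) ∈ U)
    (f F : ℝ → ℂ → ℂ)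
    (hol : ∀ t ∈ Set.Ioo 0 T, DifferentiableOn ℂ (f t) U)
    (hF : ∀ t ∈ Set.Ioo 0 T, ∀ z ∈ U, HasDerivAt (fun s => f s z) (F t z) t)
    (hFcont : ContinuousOn (fun p : ℝ × ℂ => F p.1 p.2) (Set.Ioo 0 T ×ˢ U))
    (hLoewner : ∀ t ∈ Set.Ioo 0 T, ∀ z ∈ U, z ≠ ((ξ t : ℝ) : ℂ) →
      F t z = -2 * deriv (f t) z / (z - ((ξ t : ℝ) : ℂ)))
    (γ : ℝ → ℂ) (hγ : ∀ t, γ t = f t ((ξ t : ℝ) : ℂ))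
    (hcrit : deriv (f t₀) ((ξ t₀ : ℝ) : ℂ) = 0)
    (Q : ℂ → ℂ) (hQ : AnalyticAt ℂ Q (γ t₀)) (hQne : Q (γ t₀) ≠ 0)
    (Φ : ℂ)
    (hΦ : Filter.Tendsto
      (fun z => Q (f t₀ z) * (deriv (f t₀) z) ^ 2 / (z - ((ξ t₀ : ℝ) : ℂ)) ^ 2)
      (nhdsWithin ((ξ t₀ : ℝ) : ℂ) {((ξ t₀ : ℝ) : ℂ)}ᶜ) (nhds Φ)) :
    Φ = Q (γ t₀) * (deriv (deriv (f t₀)) ((ξ t₀ : ℝ) : ℂ)) ^ 2 ∧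
    HasDerivAt γ (-2 * deriv (deriv (f t₀)) ((ξ t₀ : ℝ) : ℂ)) t₀ ∧
    Q (γ t₀) * (-2 * deriv (deriv (f t₀)) ((ξ t₀ : ℝ) : ℂ)) ^ 2 = 4 * Φ := by
  set x0 : ℂ := ((ξ t₀ : ℝ) : ℂ) with hx0
  set a : ℂ := deriv (deriv (f t₀)) x0 with ha
  -- analyticity
  have hfd : DifferentiableAt ℂ (f t₀) x0 :=
    (hol t₀ ht₀).differentiableAt (hU.mem_nhds hmem)
  have hda : AnalyticAt ℂ (deriv (f t₀)) x0 :=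
    ((hol t₀ ht₀).analyticOnNhd hU).deriv x0 hmem
  have hdd : HasDerivAt (deriv (f t₀)) a x0 := hda.differentiableAt.hasDerivAt
  -- slope limit
  have hslope : Tendsto (fun z => deriv (f t₀) z / (z - x0)) (nhdsWithin x0 {x0}ᶜ) (nhds a) := by
    have h := hasDerivAt_iff_tendsto_slope.1 hdd
    refine h.congr (fun z => ?_)
    simp [slope_def_field, hcrit]
  -- Q ∘ f limit
  have hγ0 : γ t₀ = f t₀ x0 := hγ t₀
  have hQf : Tendsto (fun z => Q (f t₀ z)) (nhdsWithin x0 {x0}ᶜ) (nhds (Q (γ t₀))) := by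
    have h1 : ContinuousAt Q (f t₀ x0) := by rw [← hγ0]; exact hQ.continuousAt
    have hc : ContinuousAt (fun z => Q (f t₀ z)) x0 := h1.comp hfd.continuousAt
    rw [hγ0]
    exact hc.tendsto.mono_left nhdsWithin_le_nhds
  have hlim : Tendsto (fun z => Q (f t₀ z) * (deriv (f t₀) z) ^ 2 / (z - x0) ^ 2)
      (nhdsWithin x0 {x0}ᶜ) (nhds (Q (γ t₀) * a ^ 2)) := by
    have h2 := hQf.mul (hslope.pow 2)
    refine h2.congr' ?_
    filter_upwards [self_mem_nhdsWithin] with z hz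
    rw [div_pow, mul_div_assoc]
  have hΦeq : Φ = Q (γ t₀) * a ^ 2 := tendsto_nhds_unique hΦ hlim
  -- value of F at (t₀, x0)
  have hFat : ContinuousAt (fun p : ℝ × ℂ => F p.1 p.2) (t₀, x0) :=
    hFcont.continuousAt (((isOpen_Ioo.prod hU)).mem_nhds ⟨ht₀, hmem⟩)
  have hF0 : F t₀ x0 = -2 * a := by
    have h1 : Tendsto (fun z => F t₀ z) (nhdsWithin x0 {x0}ᶜ) (nhds (F t₀ x0)) := by
      have : ContinuousAt (fun z => F t₀ z) x0 :=
        hFat.comp (continuousAt_const.prodMk continuousAt_id)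
      exact this.tendsto.mono_left nhdsWithin_le_nhds
    have h2 : Tendsto (fun z => F t₀ z) (nhdsWithin x0 {x0}ᶜ) (nhds (-2 * a)) := by
      have h3 := (hslope.const_mul (-2 : ℂ))
      refine h3.congr' ?_
      filter_upwards [self_mem_nhdsWithin, nhdsWithin_le_nhds (hU.mem_nhds hmem)]
        with z hz hzU
      rw [hLoewner t₀ ht₀ z hzU hz, mul_div_assoc]
    exact tendsto_nhds_unique h1 h2
  -- derivative of t ↦ f t₀ (ξ t)
  have hξd : HasDerivAt (fun t => ((ξ t : ℝ) : ℂ)) ((deriv ξ t₀ : ℝ) : ℂ) t₀ :=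
    ((hξ t₀ ht₀).hasDerivAt).ofReal_comp
  have hh : HasDerivAt (fun t => f t₀ ((ξ t : ℝ) : ℂ)) 0 t₀ := by
    have hfd' : HasDerivAt (f t₀) 0 x0 := hcrit ▸ hfd.hasDerivAt
    have := (hfd'.hasFDerivAt.restrictScalars ℝ).comp_hasDerivAt t₀ hξd
    simpa [Function.comp_def] using this
  -- derivative of t ↦ f t (ξ t) - f t₀ (ξ t) via the mean value inequality
  have hg : HasDerivAt (fun t => f t ((ξ t : ℝ) : ℂ) - f t₀ ((ξ t : ℝ) : ℂ))
      (F t₀ x0) t₀ := by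
    rw [hasDerivAt_iff_isLittleO, Asymptotics.isLittleO_iff]
    intro c hc
    have hV : {p : ℝ × ℂ | (p ∈ Set.Ioo 0 T ×ˢ U) ∧ ‖F p.1 p.2 - F t₀ x0‖ ≤ c}
        ∈ nhds (t₀, x0) := by
      have h2 : ∀ᶠ y in nhds (F t₀ x0), ‖y - F t₀ x0‖ ≤ c := by
        filter_upwards [Metric.closedBall_mem_nhds (F t₀ x0) hc] with y hy
        simpa [Metric.mem_closedBall, dist_eq_norm] using hy
      filter_upwards [hFat.eventually h2,
        (isOpen_Ioo.prod hU).mem_nhds (Set.mk_mem_prod ht₀ hmem)] with p h1 h2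
      exact ⟨h2, h1⟩
    rw [mem_nhds_prod_iff] at hV
    obtain ⟨s, hs, v, hv, hsv⟩ := hV
    obtain ⟨δ, hδ, hball⟩ := Metric.mem_nhds_iff.1 hs
    have hξcont : ContinuousAt (fun t => ((ξ t : ℝ) : ℂ)) t₀ := hξd.continuousAt
    filter_upwards [Metric.ball_mem_nhds t₀ hδ, hξcont hv] with t ht hξt
    set w : ℂ := ((ξ t : ℝ) : ℂ) with hw
    have htmem : t₀ - δ < t ∧ t < t₀ + δ := by
      rw [Real.ball_eq_Ioo] at ht; exact ⟨ht.1, ht.2⟩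
    obtain ⟨ht1, ht2⟩ := htmem
    have hsub : Set.uIcc t₀ t ⊆ Metric.ball t₀ δ := by
      intro u hu
      rw [Real.ball_eq_Ioo]
      rcases Set.mem_uIcc.1 hu with ⟨h1, h2⟩ | ⟨h1, h2⟩ <;>
        exact ⟨by linarith, by linarith⟩
    have hprop : ∀ u ∈ Set.uIcc t₀ t,
        (u ∈ Set.Ioo 0 T ∧ w ∈ U) ∧ ‖F u w - F t₀ x0‖ ≤ c := by
      intro u hu
      have h := hsv (Set.mk_mem_prod (hball (hsub hu)) hξt)
      exact ⟨⟨h.1.1, h.1.2⟩, h.2⟩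
    have hmvt := Convex.norm_image_sub_le_of_norm_hasDerivWithin_le
      (f := fun u => f u w - u • F t₀ x0) (f' := fun u => F u w - F t₀ x0)
      (s := Set.uIcc t₀ t)
      (fun u hu => by
        simpa using ((hF u (hprop u hu).1.1 w (hprop u hu).1.2).fun_sub
          ((hasDerivAt_id u).smul_const (F t₀ x0))).hasDerivWithinAt
            (s := Set.uIcc t₀ t))
      (fun u hu => (hprop u hu).2) (convex_uIcc _ _)
      Set.left_mem_uIcc Set.right_mem_uIcc
    have heq : (f t w - t • F t₀ x0) - (f t₀ w - t₀ • F t₀ x0)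
        = (f t w - f t₀ w) - (f t₀ ((ξ t₀ : ℝ) : ℂ) - f t₀ ((ξ t₀ : ℝ) : ℂ))
          - (t - t₀) • F t₀ x0 := by
      simp only [Complex.real_smul]
      push_cast
      ring
    calc ‖(f t w - f t₀ w) - (f t₀ ((ξ t₀ : ℝ) : ℂ) - f t₀ ((ξ t₀ : ℝ) : ℂ))
          - (t - t₀) • F t₀ x0‖
        = ‖(f t w - t • F t₀ x0) - (f t₀ w - t₀ • F t₀ x0)‖ := by rw [heq]
      _ ≤ c * ‖t - t₀‖ := hmvt
  -- assemble the derivative of γ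
  have hγ' : HasDerivAt γ (-2 * a) t₀ := by
    have hsum := hh.fun_add hg
    have hfun : (fun t => f t₀ ((ξ t : ℝ) : ℂ)
        + (f t ((ξ t : ℝ) : ℂ) - f t₀ ((ξ t : ℝ) : ℂ))) = γ := by
      funext t; rw [hγ t]; ring
    rw [hfun, zero_add, hF0] at hsum
    exact hsum
  exact ⟨hΦeq, hγ', by rw [hΦeq]; ring⟩
end

section
/- Let N, n ∈ ℕ, let x₁,…,x_N, ξ₁,…,ξ_N, β₁,…,β_N, μ₁⁻,…,μ_N⁻, μ₁⁺,…,μ_N⁺, α₁,…,α_n be real numbers and a₁,…,a_n, A₁,…,A_n, C₁⁻,…,C_N⁻, C₁⁺,…,C_N⁺ ∈ ℂ. Let R > 0 and let f be holomorphic on {z ∈ ℂ : |z| > R} with f(z) − z → 0 as |z| → ∞. Suppose there is R' ≥ R such that for all |z| > R' one has f'(z) ≠ 0, f(z) avoids all the points x_k and a_j, z avoids all the points ξ_k, C_k^±, A_j, and the identity Σ_{k=1}^{N}[2/(z−ξ_k) + μ_k⁻/(z−C_k⁻) + μ_k⁺/(z−C_k⁺)] + Σ_{j=1}^{n} α_j/(z−A_j)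 = (Σ_{k=1}^{N} β_k/(f(z)−x_k) + Σ_{j=1}^{n} α_j/(f(z)−a_j))·f'(z) + 2·f''(z)/f'(z). Then Σ_{k=1}^{N}(2 + μ_k⁻ + μ_k⁺) = Σ_{k=1}^{N} β_k, and 2·Σ_{k=1}^{N} ξ_k = −Σ_{k=1}^{N}(μ_k⁻·C_k⁻ + μ_k⁺·C_k⁺) − Σ_{j=1}^{n} α_j·A_j + Σ₀, where Σ₀ = Σ_{k=1}^{N} β_k·x_k + Σ_{j=1}^{n} α_j·a_j. (Formula (14) of Theorem 5.1: the multiple-slit analogue of formula (3), obtained by matching the 1/z and 1/z² coefficients at ∞.) -/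
open Complex Filter

open Metric

section helpers

private lemma abs_comap_neBot : (comap (fun z : ℂ => ‖z‖) atTop).NeBot := by
  refine Filter.comap_neBot fun t ht => ?_
  obtain ⟨b, hb⟩ := mem_atTop_sets.mp ht
  refine ⟨((max b 0 : ℝ) : ℂ), hb _ ?_⟩
  simp only [Complex.norm_real, Real.norm_eq_abs, _root_.abs_of_nonneg (le_max_right b 0)]
  exact le_max_left b 0

private lemma ev_abs' {p : ℂ → Prop} (h : ∀ᶠ z in comap (fun z : ℂ => ‖z‖) atTop, p z) :
    ∃ M : ℝ, ∀ z : ℂ, M ≤ ‖z‖ → p z := by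
  rw [Filter.eventually_comap] at h
  obtain ⟨M, hM⟩ := eventually_atTop.mp h
  exact ⟨M, fun z hz => hM _ hz _ rfl⟩

private lemma abs_ev' {p : ℂ → Prop} {M : ℝ} (h : ∀ z : ℂ, M < ‖z‖ → p z) :
    ∀ᶠ z in comap (fun z : ℂ => ‖z‖) atTop, p z := by
  have hm : {z : ℂ | M < ‖z‖} ∈ comap (fun z : ℂ => ‖z‖) atTop :=
    Filter.preimage_mem_comap (Ioi_mem_atTop M)
  filter_upwards [hm] with z hz using h z hz

private lemma cauchy_step {h : ℂ → ℂ} {ρ : ℝ}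
    (hd : ∀ z : ℂ, ρ < ‖z‖ → DifferentiableAt ℂ h z) (m : ℕ)
    (hm : Tendsto (fun z => z ^ m * h z) (comap (fun z : ℂ => ‖z‖) atTop) (nhds 0)) :
    Tendsto (fun z => z ^ (m + 1) * deriv h z) (comap (fun z : ℂ => ‖z‖) atTop) (nhds 0) := by
  rw [NormedAddCommGroup.tendsto_nhds_zero] at hm ⊢
  intro ε hε
  have hε' : 0 < ε / 2 ^ (m + 2) := by positivity
  obtain ⟨M₀, hM₀⟩ := ev_abs' (hm _ hε')
  apply abs_ev' (M := 2 * max ρ (max M₀ 1))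
  intro z hz
  set r : ℝ := ‖z‖ / 2 with hr
  have hzr : ‖z‖ = 2 * r := by rw [hr]; ring
  have hrK : max ρ (max M₀ 1) < r := by
    rw [hr]; linarith
  have hr1 : (1:ℝ) < r := lt_of_le_of_lt ((le_max_right M₀ 1).trans (le_max_right ρ _)) hrK
  have hr0 : (0:ℝ) < r := lt_trans one_pos hr1
  have hrρ : ρ < r := lt_of_le_of_lt (le_max_left _ _) hrK
  have hrM : M₀ ≤ r := ((le_max_left M₀ 1).trans (le_max_right ρ _)).trans hrK.le
  have hball : ∀ w ∈ closedBall z r, r ≤ ‖w‖ := by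
    intro w hw
    have h1 : ‖z - w‖ ≤ r := by
      rw [mem_closedBall, Complex.dist_eq] at hw
      rwa [norm_sub_rev]
    have h2 := norm_sub_norm_le z w
    linarith
  have hdc : DiffContOnCl ℂ h (ball z r) :=
    DifferentiableOn.diffContOnCl (by
      rw [closure_ball z hr0.ne']
      exact fun w hw => (hd w (lt_of_lt_of_le hrρ (hball w hw))).differentiableWithinAt)
  have hsb : ∀ w ∈ sphere z r, ‖h w‖ ≤ (ε / 2 ^ (m + 2)) / r ^ m := by
    intro w hw
    have hrw := hball w (sphere_subset_closedBall hw)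
    have h1 : ‖w ^ m * h w‖ ≤ ε / 2 ^ (m + 2) := (hM₀ w (le_trans hrM hrw)).le
    have h2 : ‖w ^ m * h w‖ = ‖w‖ ^ m * ‖h w‖ := by
      simp [map_pow]
    have hwpos : 0 < ‖w‖ ^ m := pow_pos (lt_of_lt_of_le hr0 hrw) m
    have h3 : ‖h w‖ ≤ (ε / 2 ^ (m + 2)) / ‖w‖ ^ m := by
      rw [le_div_iff₀ hwpos]
      calc ‖h w‖ * ‖w‖ ^ m = ‖w‖ ^ m * ‖h w‖ := by ring
        _ ≤ ε / 2 ^ (m + 2) := h2 ▸ h1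
    refine h3.trans ?_
    gcongr
  have hest : ‖deriv h z‖ ≤ ((ε / 2 ^ (m + 2)) / r ^ m) / r :=
    Complex.norm_deriv_le_of_forall_mem_sphere_norm_le hr0 hdc hsb
  have hfin : ‖z ^ (m + 1) * deriv h z‖ ≤ ε / 2 := by
    have e1 : ‖z ^ (m + 1) * deriv h z‖ = ‖z‖ ^ (m + 1) * ‖deriv h z‖ := by
      simp [map_pow]
    rw [e1, hzr]
    calc (2 * r) ^ (m + 1) * ‖deriv h z‖
        ≤ (2 * r) ^ (m + 1) * (((ε / 2 ^ (m + 2)) / r ^ m) / r) :=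
          mul_le_mul_of_nonneg_left hest (by positivity)
      _ = ε / 2 := by
          rw [mul_pow]
          field_simp
          ring
  linarith

private lemma tendsto_abs_sub_atTop (p : ℂ) :
    Tendsto (fun z : ℂ => ‖z - p‖) (comap (fun z : ℂ => ‖z‖) atTop) atTop := by
  refine tendsto_atTop_mono (fun z => ?_)
    (tendsto_atTop_add_const_right _ (-‖p‖) tendsto_comap)
  have := norm_sub_norm_le z p
  simpa [sub_eq_add_neg] using this

private lemma tendsto_sub_inv (p : ℂ) :
    Tendsto (fun z : ℂ => (z - p)⁻¹) (comap (fun z : ℂ => ‖z‖) atTop) (nhds 0) := by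
  rw [tendsto_zero_iff_norm_tendsto_zero]
  refine (tendsto_inv_atTop_zero.comp (tendsto_abs_sub_atTop p)).congr fun z => ?_
  simp

private lemma tendsto_inv_L :
    Tendsto (fun z : ℂ => z⁻¹) (comap (fun z : ℂ => ‖z‖) atTop) (nhds 0) := by
  simpa using tendsto_sub_inv 0

private lemma tendsto_frac (p : ℂ) :
    Tendsto (fun z : ℂ => z * (z - p)⁻¹) (comap (fun z : ℂ => ‖z‖) atTop) (nhds 1) := by
  have h1 : Tendsto (fun z : ℂ => 1 + p * (z - p)⁻¹) (comap (fun z : ℂ => ‖z‖) atTop) (nhds 1) := by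
    simpa using tendsto_const_nhds.add ((tendsto_sub_inv p).const_mul p)
  refine h1.congr' ?_
  refine abs_ev' (M := ‖p‖) fun z hz => ?_
  have hzp : z - p ≠ 0 := sub_ne_zero.mpr (by rintro rfl; exact lt_irrefl _ hz)
  field_simp
  ring

end helpers

/-- formula (14) of Theorem 5.1: multiple-slit analogue of
formula (3), by matching `1/z` and `1/z²` coefficients at `∞`.  If `f` is
holomorphic on `{|z| > R}` with `f(z) - z → 0` as `|z| → ∞` and, for all large
`|z|`, `Σ_k [2/(z-ξ_k) + μ_k⁻/(z-C_k⁻) + μ_k⁺/(z-C_k⁺)] + Σ_j α_j/(z-A_j)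
 = (Σ_k β_k/(f z - x_k) + Σ_j α_j/(f z - a_j))·f'(z) + 2f''(z)/f'(z)`, then
`Σ_k (2 + μ_k⁻ + μ_k⁺) = Σ_k β_k` and
`2 Σ_k ξ_k = -Σ_k (μ_k⁻ C_k⁻ + μ_k⁺ C_k⁺) - Σ_j α_j A_j + Σ₀` with
`Σ₀ = Σ_k β_k x_k + Σ_j α_j a_j`. -/
theorem stmt_9 (N n : ℕ) (x ξ β μm μp : Fin N → ℝ) (α : Fin n → ℝ)
    (a A : Fin n → ℂ) (Cm Cp : Fin N → ℂ)
    (R : ℝ) (hR : 0 < R) (f : ℂ → ℂ)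
    (hf : ∀ z : ℂ, R < ‖z‖ → DifferentiableAt ℂ f z)
    (hnorm : Tendsto (fun z => f z - z) (comap (fun z : ℂ => ‖z‖) atTop) (nhds 0))
    (R' : ℝ) (hR' : R ≤ R')
    (hid : ∀ z : ℂ, R' < ‖z‖ →
      deriv f z ≠ 0 ∧ (∀ k, f z ≠ ((x k : ℝ) : ℂ)) ∧ (∀ j, f z ≠ a j) ∧
      (∀ k, z ≠ ((ξ k : ℝ) : ℂ)) ∧ (∀ k, z ≠ Cm k) ∧ (∀ k, z ≠ Cp k) ∧
      (∀ j, z ≠ A j) ∧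
      (∑ k, (2 / (z - ((ξ k : ℝ) : ℂ)) + (μm k : ℂ) / (z - Cm k)
          + (μp k : ℂ) / (z - Cp k)))
        + ∑ j, (α j : ℂ) / (z - A j)
      = ((∑ k, (β k : ℂ) / (f z - ((x k : ℝ) : ℂ)))
          + ∑ j, (α j : ℂ) / (f z - a j)) * deriv f z
        + 2 * deriv (deriv f) z / deriv f z) :
    (∑ k, (2 + μm k + μp k)) = ∑ k, β k ∧
    ((2 * ∑ k, ξ k : ℝ) : ℂ)
      = -(∑ k, ((μm k : ℂ) * Cm k + (μp k : ℂ) * Cp k))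
        - (∑ j, (α j : ℂ) * A j)
        + (((∑ k, β k * x k : ℝ) : ℂ) + ∑ j, (α j : ℂ) * a j) := by
  classical
  haveI hLne : (comap (fun z : ℂ => ‖z‖) atTop).NeBot := abs_comap_neBot
  -- the auxiliary function `g z = f z - z`
  have hgd : ∀ z : ℂ, R < ‖z‖ → DifferentiableAt ℂ (fun w => f w - w) z :=
    fun z hz => (hf z hz).sub differentiableAt_id
  have hopen : IsOpen {z : ℂ | R < ‖z‖} :=
    isOpen_lt continuous_const continuous_norm
  have hmemnhds : ∀ z : ℂ, R < ‖z‖ → {w : ℂ | R < ‖w‖} ∈ nhds z :=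
    fun z hz => hopen.mem_nhds hz
  have hdg : ∀ z : ℂ, R < ‖z‖ →
      deriv (fun w => f w - w) z = deriv f z - 1 := by
    intro z hz
    exact ((hf z hz).hasDerivAt.sub (hasDerivAt_id z)).deriv
  -- first Cauchy step : z * g'(z) → 0
  have Hg1 : Tendsto (fun z => z * deriv (fun w => f w - w) z)
      (comap (fun z : ℂ => ‖z‖) atTop) (nhds 0) := by
    have := cauchy_step hgd 0 (by simpa using hnorm)
    simpa using this
  -- g' → 0
  have Hdg0 : Tendsto (fun z => deriv (fun w => f w - w) z)
      (comap (fun z : ℂ => ‖z‖) atTop) (nhds 0) := by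
    have h1 : Tendsto (fun z => z * deriv (fun w => f w - w) z * z⁻¹)
        (comap (fun z : ℂ => ‖z‖) atTop) (nhds 0) := by
      simpa using Hg1.mul tendsto_inv_L
    refine h1.congr' ?_
    refine abs_ev' (M := R) fun z hz => ?_
    have hz0 : z ≠ 0 := by
      intro h; rw [h] at hz; simp at hz; linarith
    dsimp only
    field_simp
  -- differentiability of g'
  have hdgd : ∀ z : ℂ, R < ‖z‖ →
      DifferentiableAt ℂ (deriv (fun w => f w - w)) z := by
    intro z hz
    have hfan : AnalyticOnNhd ℂ f {w : ℂ | R < ‖w‖} :=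
      DifferentiableOn.analyticOnNhd (fun w hw => (hf w hw).differentiableWithinAt) hopen
    have hdf : DifferentiableAt ℂ (deriv f) z := ((hfan.deriv) z hz).differentiableAt
    refine (hdf.sub_const 1).congr_of_eventuallyEq ?_
    filter_upwards [hmemnhds z hz] with w hw using hdg w hw
  -- second Cauchy step : z² * g''(z) → 0
  have Hg2 : Tendsto (fun z => z ^ 2 * deriv (deriv (fun w => f w - w)) z)
      (comap (fun z : ℂ => ‖z‖) atTop) (nhds 0) := by
    have := cauchy_step hdgd 1 (by simpa using Hg1)
    simpa using this
  -- f'' = g'' on the domain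
  have hddf : ∀ z : ℂ, R < ‖z‖ →
      deriv (deriv f) z = deriv (deriv (fun w => f w - w)) z := by
    intro z hz
    have hev : deriv f =ᶠ[nhds z] fun w => deriv (fun w' => f w' - w') w + 1 := by
      filter_upwards [hmemnhds z hz] with w hw
      rw [hdg w hw]; ring
    rw [hev.deriv_eq]
    simp
  -- f' → 1
  have hf'1 : Tendsto (fun z => deriv f z) (comap (fun z : ℂ => ‖z‖) atTop) (nhds 1) := by
    have h1 : Tendsto (fun z => deriv (fun w => f w - w) z + 1)
        (comap (fun z : ℂ => ‖z‖) atTop) (nhds 1) := by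
      simpa using Hdg0.add tendsto_const_nhds
    refine h1.congr' ?_
    exact abs_ev' (M := R) fun z hz => by dsimp only; rw [hdg z hz]; ring
  have hf'inv : Tendsto (fun z => (deriv f z)⁻¹) (comap (fun z : ℂ => ‖z‖) atTop) (nhds 1) := by
    simpa using hf'1.inv₀ one_ne_zero
  -- z² f'' → 0
  have hF2 : Tendsto (fun z => z ^ 2 * deriv (deriv f) z) (comap (fun z : ℂ => ‖z‖) atTop) (nhds 0) := by
    refine Hg2.congr' ?_
    exact abs_ev' (M := R) fun z hz => by dsimp only; rw [hddf z hz]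
  -- z/(f z - c) → 1
  have hv : ∀ c : ℂ, Tendsto (fun z => z * (f z - c)⁻¹) (comap (fun z : ℂ => ‖z‖) atTop) (nhds 1) := by
    intro c
    have h1 : Tendsto (fun z => 1 + (f z - z - c) * z⁻¹) (comap (fun z : ℂ => ‖z‖) atTop) (nhds 1) := by
      simpa using tendsto_const_nhds.add ((hnorm.sub_const c).mul tendsto_inv_L)
    have h2 : Tendsto (fun z => (f z - c) * z⁻¹) (comap (fun z : ℂ => ‖z‖) atTop) (nhds 1) := by
      refine h1.congr' ?_
      refine abs_ev' (M := R) fun z hz => ?_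
      have hz0 : z ≠ 0 := by intro h; rw [h] at hz; simp at hz; linarith
      dsimp only
      field_simp
      ring
    have h3 : Tendsto (fun z => ((f z - c) * z⁻¹)⁻¹) (comap (fun z : ℂ => ‖z‖) atTop) (nhds 1) := by
      simpa using h2.inv₀ one_ne_zero
    refine h3.congr fun z => ?_
    rw [mul_inv, inv_inv, mul_comm]
  -- z f'(z) - f(z) + c → c
  have hw : ∀ c : ℂ, Tendsto (fun z => z * deriv f z - f z + c)
      (comap (fun z : ℂ => ‖z‖) atTop) (nhds c) := by
    intro c
    have h1 : Tendsto (fun z => z * deriv (fun w => f w - w) z - (f z - z) + c)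
        (comap (fun z : ℂ => ‖z‖) atTop) (nhds c) := by
      simpa using (Hg1.sub hnorm).add (tendsto_const_nhds (x := c))
    refine h1.congr' ?_
    refine abs_ev' (M := R) fun z hz => ?_
    dsimp only
    rw [hdg z hz]; ring
  -- ### limit of z * (identity) : the 1/z coefficient
  have TL : Tendsto (fun z : ℂ => z *
      ((∑ k, (2 / (z - ((ξ k : ℝ) : ℂ)) + (μm k : ℂ) / (z - Cm k) + (μp k : ℂ) / (z - Cp k)))
        + ∑ j, (α j : ℂ) / (z - A j)))
      (comap (fun z : ℂ => ‖z‖) atTop)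
      (nhds ((∑ k, ((2:ℂ) + (μm k : ℂ) + (μp k : ℂ))) + ∑ j, (α j : ℂ))) := by
    have TL0 : Tendsto (fun z : ℂ =>
        (∑ k, ((2:ℂ) * (z * (z - ((ξ k : ℝ) : ℂ))⁻¹) + (μm k : ℂ) * (z * (z - Cm k)⁻¹)
          + (μp k : ℂ) * (z * (z - Cp k)⁻¹)))
        + ∑ j, (α j : ℂ) * (z * (z - A j)⁻¹)) (comap (fun z : ℂ => ‖z‖) atTop)
        (nhds ((∑ k, ((2:ℂ) * 1 + (μm k : ℂ) * 1 + (μp k : ℂ) * 1)) + ∑ j, (α j : ℂ) * 1)) := by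
      refine Tendsto.add ?_ ?_
      · exact tendsto_finset_sum _ fun k _ =>
          (((tendsto_frac _).const_mul 2).add ((tendsto_frac _).const_mul ((μm k : ℂ)))).add
            ((tendsto_frac _).const_mul ((μp k : ℂ)))
      · exact tendsto_finset_sum _ fun j _ => (tendsto_frac _).const_mul _
    simp only [mul_one] at TL0
    refine TL0.congr fun z => ?_
    rw [mul_add, Finset.mul_sum, Finset.mul_sum]
    congr 1
    · exact Finset.sum_congr rfl fun k _ => by simp only [div_eq_mul_inv]; ring
    · exact Finset.sum_congr rfl fun j _ => by simp only [div_eq_mul_inv]; ring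
  have TR : Tendsto (fun z : ℂ => z *
      ((∑ k, (2 / (z - ((ξ k : ℝ) : ℂ)) + (μm k : ℂ) / (z - Cm k) + (μp k : ℂ) / (z - Cp k)))
        + ∑ j, (α j : ℂ) / (z - A j)))
      (comap (fun z : ℂ => ‖z‖) atTop)
      (nhds ((∑ k, (β k : ℂ)) + ∑ j, (α j : ℂ))) := by
    have TR0 : Tendsto (fun z : ℂ =>
        ((∑ k, (β k : ℂ) * (z * (f z - ((x k : ℝ) : ℂ))⁻¹))
            + ∑ j, (α j : ℂ) * (z * (f z - a j)⁻¹)) * deriv f z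
          + 2 * (z ^ 2 * deriv (deriv f) z) * (z⁻¹ * (deriv f z)⁻¹))
        (comap (fun z : ℂ => ‖z‖) atTop)
        (nhds (((∑ k, (β k : ℂ) * 1) + ∑ j, (α j : ℂ) * 1) * 1 + 2 * 0 * (0 * 1))) := by
      refine Tendsto.add (Tendsto.mul (Tendsto.add ?_ ?_) hf'1) ?_
      · exact tendsto_finset_sum _ fun k _ => (hv _).const_mul _
      · exact tendsto_finset_sum _ fun j _ => (hv _).const_mul _
      · exact (hF2.const_mul 2).mul (tendsto_inv_L.mul hf'inv)
    simp only [mul_one, mul_zero, zero_mul, add_zero] at TR0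
    refine TR0.congr' ?_
    filter_upwards [abs_ev' (M := R') hid,
      abs_ev' (M := R') (fun z (hz : R' < ‖z‖) => hz)] with z hz hzR
    obtain ⟨hd0, hfx, hfa, -, -, -, -, hident⟩ := hz
    have hz0 : z ≠ 0 := by
      intro h; rw [h] at hzR; simp at hzR; linarith
    rw [hident]
    have e1 : ∑ k, (β k : ℂ) * (z * (f z - ((x k : ℝ) : ℂ))⁻¹)
        = z * ∑ k, (β k : ℂ) / (f z - ((x k : ℝ) : ℂ)) := by
      rw [Finset.mul_sum]
      exact Finset.sum_congr rfl fun k _ => by rw [div_eq_mul_inv]; ring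
    have e2 : ∑ j, (α j : ℂ) * (z * (f z - a j)⁻¹)
        = z * ∑ j, (α j : ℂ) / (f z - a j) := by
      rw [Finset.mul_sum]
      exact Finset.sum_congr rfl fun j _ => by rw [div_eq_mul_inv]; ring
    have e3 : 2 * (z ^ 2 * deriv (deriv f) z) * (z⁻¹ * (deriv f z)⁻¹)
        = z * (2 * deriv (deriv f) z / deriv f z) := by
      field_simp
    rw [e1, e2, e3]
    ring
  have key1 : (∑ k, ((2:ℂ) + (μm k : ℂ) + (μp k : ℂ))) + ∑ j, (α j : ℂ)
      = (∑ k, (β k : ℂ)) + ∑ j, (α j : ℂ) := tendsto_nhds_unique TL TR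
  have key1' : (∑ k, ((2:ℂ) + (μm k : ℂ) + (μp k : ℂ))) = ∑ k, (β k : ℂ) :=
    add_right_cancel key1
  refine ⟨?_, ?_⟩
  · exact Complex.ofReal_injective (by push_cast; exact key1')
  -- ### limit of z * (z * identity - Σ) : the 1/z² coefficient
  have TL2 : Tendsto (fun z : ℂ => z * (z *
      ((∑ k, (2 / (z - ((ξ k : ℝ) : ℂ)) + (μm k : ℂ) / (z - Cm k) + (μp k : ℂ) / (z - Cp k)))
        + ∑ j, (α j : ℂ) / (z - A j))
      - ((∑ k, ((2:ℂ) + (μm k : ℂ) + (μp k : ℂ))) + ∑ j, (α j : ℂ))))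
      (comap (fun z : ℂ => ‖z‖) atTop)
      (nhds ((∑ k, ((2:ℂ) * ((ξ k : ℝ) : ℂ) + (μm k : ℂ) * Cm k + (μp k : ℂ) * Cp k))
        + ∑ j, (α j : ℂ) * A j)) := by
    have T0 : Tendsto (fun z : ℂ =>
        (∑ k, ((2:ℂ) * ((ξ k : ℝ) : ℂ) * (z * (z - ((ξ k : ℝ) : ℂ))⁻¹)
          + (μm k : ℂ) * Cm k * (z * (z - Cm k)⁻¹)
          + (μp k : ℂ) * Cp k * (z * (z - Cp k)⁻¹)))
        + ∑ j, (α j : ℂ) * A j * (z * (z - A j)⁻¹)) (comap (fun z : ℂ => ‖z‖) atTop)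
        (nhds ((∑ k, ((2:ℂ) * ((ξ k : ℝ) : ℂ) * 1 + (μm k : ℂ) * Cm k * 1
          + (μp k : ℂ) * Cp k * 1)) + ∑ j, (α j : ℂ) * A j * 1)) := by
      refine Tendsto.add ?_ ?_
      · exact tendsto_finset_sum _ fun k _ =>
          (((tendsto_frac _).const_mul _).add ((tendsto_frac _).const_mul _)).add
            ((tendsto_frac _).const_mul _)
      · exact tendsto_finset_sum _ fun j _ => (tendsto_frac _).const_mul _
    simp only [mul_one] at T0
    refine T0.congr' ?_
    filter_upwards [abs_ev' (M := R') hid] with z hz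
    obtain ⟨-, -, -, hξ, hCm, hCp, hA, -⟩ := hz
    have hξ' : ∀ k, z - ((ξ k : ℝ) : ℂ) ≠ 0 := fun k => sub_ne_zero.mpr (hξ k)
    have hCm' : ∀ k, z - Cm k ≠ 0 := fun k => sub_ne_zero.mpr (hCm k)
    have hCp' : ∀ k, z - Cp k ≠ 0 := fun k => sub_ne_zero.mpr (hCp k)
    have hA' : ∀ j, z - A j ≠ 0 := fun j => sub_ne_zero.mpr (hA j)
    have h1 : z * ((∑ k, (2 / (z - ((ξ k : ℝ) : ℂ)) + (μm k : ℂ) / (z - Cm k)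
          + (μp k : ℂ) / (z - Cp k))) + ∑ j, (α j : ℂ) / (z - A j))
        - ((∑ k, ((2:ℂ) + (μm k : ℂ) + (μp k : ℂ))) + ∑ j, (α j : ℂ))
        = (∑ k, (z * (2 / (z - ((ξ k : ℝ) : ℂ)) + (μm k : ℂ) / (z - Cm k)
            + (μp k : ℂ) / (z - Cp k)) - ((2:ℂ) + (μm k : ℂ) + (μp k : ℂ))))
          + ∑ j, (z * ((α j : ℂ) / (z - A j)) - (α j : ℂ)) := by
      simp only [mul_add, Finset.mul_sum, Finset.sum_sub_distrib]
      ring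
    rw [h1, mul_add, Finset.mul_sum, Finset.mul_sum]
    congr 1
    · refine Finset.sum_congr rfl fun k _ => ?_
      have hu1 : (z - ((ξ k : ℝ) : ℂ)) * (z - ((ξ k : ℝ) : ℂ))⁻¹ = 1 := mul_inv_cancel₀ (hξ' k)
      have hu2 : (z - Cm k) * (z - Cm k)⁻¹ = 1 := mul_inv_cancel₀ (hCm' k)
      have hu3 : (z - Cp k) * (z - Cp k)⁻¹ = 1 := mul_inv_cancel₀ (hCp' k)
      linear_combination (-(2 * z)) * hu1 + (-((μm k : ℂ) * z)) * hu2 + (-((μp k : ℂ) * z)) * hu3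
    · refine Finset.sum_congr rfl fun j _ => ?_
      have hu : (z - A j) * (z - A j)⁻¹ = 1 := mul_inv_cancel₀ (hA' j)
      linear_combination (-((α j : ℂ) * z)) * hu
  have TR2 : Tendsto (fun z : ℂ => z * (z *
      ((∑ k, (2 / (z - ((ξ k : ℝ) : ℂ)) + (μm k : ℂ) / (z - Cm k) + (μp k : ℂ) / (z - Cp k)))
        + ∑ j, (α j : ℂ) / (z - A j))
      - ((∑ k, ((2:ℂ) + (μm k : ℂ) + (μp k : ℂ))) + ∑ j, (α j : ℂ))))
      (comap (fun z : ℂ => ‖z‖) atTop)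
      (nhds ((∑ k, (β k : ℂ) * ((x k : ℝ) : ℂ)) + ∑ j, (α j : ℂ) * a j)) := by
    have T0 : Tendsto (fun z : ℂ =>
        ((∑ k, (β k : ℂ) * ((z * (f z - ((x k : ℝ) : ℂ))⁻¹)
            * (z * deriv f z - f z + ((x k : ℝ) : ℂ))))
          + ∑ j, (α j : ℂ) * ((z * (f z - a j)⁻¹) * (z * deriv f z - f z + a j)))
        + 2 * (z ^ 2 * deriv (deriv f) z) * (deriv f z)⁻¹)
        (comap (fun z : ℂ => ‖z‖) atTop)
        (nhds (((∑ k, (β k : ℂ) * (1 * ((x k : ℝ) : ℂ))) + ∑ j, (α j : ℂ) * (1 * a j))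
          + 2 * 0 * 1)) := by
      refine Tendsto.add (Tendsto.add ?_ ?_) ?_
      · exact tendsto_finset_sum _ fun k _ => ((hv _).mul (hw _)).const_mul _
      · exact tendsto_finset_sum _ fun j _ => ((hv _).mul (hw _)).const_mul _
      · exact (hF2.const_mul 2).mul hf'inv
    simp only [one_mul, mul_zero, zero_mul, mul_one, add_zero] at T0
    refine T0.congr' ?_
    filter_upwards [abs_ev' (M := R') hid] with z hz
    obtain ⟨hd0, hfx, hfa, -, -, -, -, hident⟩ := hz
    have hfx' : ∀ k, f z - ((x k : ℝ) : ℂ) ≠ 0 := fun k => sub_ne_zero.mpr (hfx k)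
    have hfa' : ∀ j, f z - a j ≠ 0 := fun j => sub_ne_zero.mpr (hfa j)
    have hs1 : ∑ k, (β k : ℂ) * ((z * (f z - ((x k : ℝ) : ℂ))⁻¹)
          * (z * deriv f z - f z + ((x k : ℝ) : ℂ)))
        = z * z * deriv f z * (∑ k, (β k : ℂ) * (f z - ((x k : ℝ) : ℂ))⁻¹)
          - z * ∑ k, (β k : ℂ) := by
      rw [Finset.mul_sum, Finset.mul_sum, ← Finset.sum_sub_distrib]
      refine Finset.sum_congr rfl fun k _ => ?_
      have hu : (f z - ((x k : ℝ) : ℂ)) * (f z - ((x k : ℝ) : ℂ))⁻¹ = 1 :=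
        mul_inv_cancel₀ (hfx' k)
      linear_combination (-((β k : ℂ) * z)) * hu
    have hs2 : ∑ j, (α j : ℂ) * ((z * (f z - a j)⁻¹) * (z * deriv f z - f z + a j))
        = z * z * deriv f z * (∑ j, (α j : ℂ) * (f z - a j)⁻¹)
          - z * ∑ j, (α j : ℂ) := by
      rw [Finset.mul_sum, Finset.mul_sum, ← Finset.sum_sub_distrib]
      refine Finset.sum_congr rfl fun j _ => ?_
      have hu : (f z - a j) * (f z - a j)⁻¹ = 1 := mul_inv_cancel₀ (hfa' j)
      linear_combination (-((α j : ℂ) * z)) * hu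
    rw [hident, key1, hs1, hs2]
    simp only [div_eq_mul_inv]
    ring
  have key2 : (∑ k, ((2:ℂ) * ((ξ k : ℝ) : ℂ) + (μm k : ℂ) * Cm k + (μp k : ℂ) * Cp k))
        + ∑ j, (α j : ℂ) * A j
      = (∑ k, (β k : ℂ) * ((x k : ℝ) : ℂ)) + ∑ j, (α j : ℂ) * a j :=
    tendsto_nhds_unique TL2 TR2
  push_cast
  simp only [Finset.sum_add_distrib] at key2 ⊢
  rw [← Finset.mul_sum] at key2
  linear_combination key2
end

section
/- Let ψ > 0, N ∈ ℕ, c ∈ ℝ and ξ₀ ∈ ℝ. Let F be holomorphic on an open ball B centered at c with F(c) = 0, F'(c) > 0, and F real-valued on B ∩ ℝ (so that, after shrinking B, F maps B ∩ ℍ into ℍ). Define f(z) = ξ₀ + F(z)^ψ for z ∈ B ∩ ℍ, using the principal branch of the complex power. Let Q(w) = (w − ξ₀)^N · g(w), where g is holomorphic on a neighborhood of ξ₀ with g(ξ₀) ≠ 0. Then lim_{z→c, z∈ℍ} (z − c)·[ (Q'(f(z))/Q(f(z)))·f'(z) + 2·f''(z)/f'(z) ] = ψ·(N+2) − 2. (The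 residue computation in the proof of Corollary 2.5: the pulled-back quadratic differential Q_f(z) = Q(f(z))·f'(z)² has a simple pole of its logarithmic derivative at the corner point c with residue μ = ψ(N+2) − 2, identifying the exponent at the preimage of the base of the slit; equivalently ψ = (μ+2)/(N+2), the angle formula.) -/
open Complex Metric


private lemma natmul_pow_div {x : ℂ} (hx : x ≠ 0) (N : ℕ) :
    (N : ℂ) * x ^ (N - 1) = (N : ℂ) * x ^ N / x := by
  cases N with
  | zero => simp
  | succ n => rw [pow_succ]; field_simp; simp

private lemma im_pos_lemma (F : ℂ → ℂ) (c ρ : ℝ)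
    (hF : DifferentiableOn ℂ F (ball ((c:ℝ):ℂ) ρ))
    (hre : ∀ ζ ∈ ball ((c:ℝ):ℂ) ρ, 0 < (deriv F ζ).re)
    (hreal : ∀ x : ℝ, ((x:ℝ):ℂ) ∈ ball ((c:ℝ):ℂ) ρ → (F x).im = 0) :
    ∀ z ∈ ball ((c:ℝ):ℂ) ρ, 0 < z.im → 0 < (F z).im := by
  intro z hz hy
  set x : ℝ := z.re with hx
  set y : ℝ := z.im with hyy
  have hsub : ∀ s : ℝ, s ∈ Set.uIcc (0:ℝ) y → ((x:ℂ) + s*I) ∈ ball ((c:ℝ):ℂ) ρ := by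
    intro s hs
    rw [Set.uIcc_of_le hy.le] at hs
    rw [mem_ball, Complex.dist_eq_re_im]
    rw [mem_ball, Complex.dist_eq_re_im] at hz
    have h1 : ((x:ℂ) + s*I).re = x := by simp
    have h2 : ((x:ℂ) + s*I).im = s := by simp
    rw [h1, h2]
    refine lt_of_le_of_lt ?_ hz
    have : ((c:ℝ):ℂ).re = c := by simp
    have : ((c:ℝ):ℂ).im = 0 := by simp
    simp only [Complex.ofReal_re, Complex.ofReal_im]
    apply Real.sqrt_le_sqrt
    have : s^2 ≤ y^2 := by nlinarith [hs.1, hs.2]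
    nlinarith
  have hderiv : ∀ s ∈ Set.uIcc (0:ℝ) y,
      HasDerivAt (fun s : ℝ => F ((x:ℂ) + s*I)) (deriv F ((x:ℂ) + s*I) * I) s := by
    intro s hs
    have h1 : HasDerivAt (fun s : ℝ => (x:ℂ) + (s:ℂ)*I) I s := by
      simpa using (((hasDerivAt_id s).ofReal_comp).mul_const I).const_add (x:ℂ)
    have h2 : HasDerivAt F (deriv F ((x:ℂ) + s*I)) ((x:ℂ) + s*I) :=
      (hF.differentiableAt (isOpen_ball.mem_nhds (hsub s hs))).hasDerivAt
    exact h2.comp s h1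
  have hcont : ContinuousOn (fun s : ℝ => deriv F ((x:ℂ) + s*I) * I) (Set.uIcc (0:ℝ) y) := by
    have hA : AnalyticOnNhd ℂ (deriv F) (ball ((c:ℝ):ℂ) ρ) :=
      (hF.analyticOnNhd isOpen_ball).deriv
    have : ContinuousOn (deriv F) (ball ((c:ℝ):ℂ) ρ) := fun w hw => (hA w hw).continuousAt.continuousWithinAt
    exact ((this.comp (Continuous.continuousOn (by continuity)) hsub).mul continuousOn_const)
  have hint : IntervalIntegrable (fun s : ℝ => deriv F ((x:ℂ) + s*I) * I) MeasureTheory.volume 0 y :=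
    hcont.intervalIntegrable
  have hFTC := intervalIntegral.integral_eq_sub_of_hasDerivAt hderiv hint
  have him := Complex.imCLM.intervalIntegral_comp_comm hint
  simp only [Complex.imCLM_apply] at him
  rw [hFTC] at him
  have hz0 : (x:ℂ) + (0:ℝ)*I = (x:ℂ) := by simp
  have hzy : (x:ℂ) + (y:ℝ)*I = z := Complex.re_add_im z
  rw [hz0, hzy] at him
  have hFx : (F x).im = 0 := hreal x (by simpa using hsub 0 (Set.left_mem_uIcc))
  have hpos : 0 < ∫ s in (0:ℝ)..y, (deriv F ((x:ℂ) + s*I) * I).im := by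
    apply intervalIntegral.intervalIntegral_pos_of_pos_on
    · exact (Complex.continuous_im.comp_continuousOn hcont).intervalIntegrable
    · intro s hs
      have hmem : ((x:ℂ) + s*I) ∈ ball ((c:ℝ):ℂ) ρ := hsub s (by
        rw [Set.uIcc_of_le hy.le]; exact ⟨hs.1.le, hs.2.le⟩)
      have := hre _ hmem
      simpa [Complex.mul_I_im] using this
    · exact hy
  rw [him] at hpos
  simp only [Complex.sub_im, hFx, sub_zero] at hpos
  exact hpos



/-- residue computation in the proof of Corollary 2.5: the angle
formula `μ = ψ(N+2) - 2`.  Let `F` be holomorphic on a ball `B` about `c ∈ ℝ` with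
`F(c) = 0`, `F'(c) > 0`, `F` real on `B ∩ ℝ`; let `f(z) = ξ₀ + F(z)^ψ` (principal
branch), and `Q(w) = (w-ξ₀)^N·g(w)` with `g` holomorphic and nonzero at `ξ₀`.  Then
`(z-c)·[(Q'(f z)/Q(f z))·f'(z) + 2 f''(z)/f'(z)] → ψ(N+2) - 2` as `z → c` in `ℍ`. -/
theorem stmt_14 (ψ : ℝ) (hψ : 0 < ψ) (N : ℕ) (c ξ₀ : ℝ)
    (r : ℝ) (hr : 0 < r) (F : ℂ → ℂ)
    (hF : DifferentiableOn ℂ F (Metric.ball ((c : ℝ) : ℂ) r))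
    (hFc : F ((c : ℝ) : ℂ) = 0)
    (hF' : ∃ d : ℝ, 0 < d ∧ deriv F ((c : ℝ) : ℂ) = (d : ℂ))
    (hFreal : ∀ x : ℝ, ((x : ℝ) : ℂ) ∈ Metric.ball ((c : ℝ) : ℂ) r → (F x).im = 0)
    (f : ℂ → ℂ) (hf : ∀ z, f z = (ξ₀ : ℂ) + F z ^ ((ψ : ℝ) : ℂ))
    (g : ℂ → ℂ) (hg : AnalyticAt ℂ g ((ξ₀ : ℝ) : ℂ)) (hg0 : g ((ξ₀ : ℝ) : ℂ) ≠ 0)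
    (Q : ℂ → ℂ) (hQ : ∀ w, Q w = (w - (ξ₀ : ℂ)) ^ N * g w) :
    Filter.Tendsto
      (fun z => (z - ((c : ℝ) : ℂ)) *
        ((deriv Q (f z) / Q (f z)) * deriv f z
          + 2 * deriv (deriv f) z / deriv f z))
      (nhdsWithin ((c : ℝ) : ℂ) {z : ℂ | 0 < z.im})
      (nhds (((ψ * ((N : ℝ) + 2) - 2 : ℝ) : ℂ))) := by
  obtain ⟨d, hd0, hdF⟩ := hF'
  set l := nhdsWithin ((c:ℝ):ℂ) {z : ℂ | 0 < z.im} with hl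
  have hcball : ((c:ℝ):ℂ) ∈ ball ((c:ℝ):ℂ) r := mem_ball_self hr
  have hFa : AnalyticOnNhd ℂ F (ball ((c:ℝ):ℂ) r) := hF.analyticOnNhd isOpen_ball
  have hF1a : AnalyticOnNhd ℂ (deriv F) (ball ((c:ℝ):ℂ) r) := hFa.deriv
  have hF2a : AnalyticOnNhd ℂ (deriv (deriv F)) (ball ((c:ℝ):ℂ) r) := hF1a.deriv
  -- a ball where Re (deriv F) > 0
  have hrecont : ContinuousAt (fun z => (deriv F z).re) ((c:ℝ):ℂ) :=
    Complex.continuous_re.continuousAt.comp (hF1a _ hcball).continuousAt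
  have hre_pos : ∀ᶠ ζ in nhds ((c:ℝ):ℂ), 0 < (deriv F ζ).re := by
    have : (deriv F ((c:ℝ):ℂ)).re = d := by rw [hdF]; simp
    exact continuousAt_const.eventually_lt hrecont (by rw [this]; exact hd0)
  obtain ⟨ρ1, hρ1pos, hρ1⟩ : ∃ ρ1 > 0, ∀ ζ ∈ ball ((c:ℝ):ℂ) ρ1, 0 < (deriv F ζ).re :=
    Metric.eventually_nhds_iff_ball.mp hre_pos
  -- a ball around ξ₀ where g is analytic and nonzero
  have hgev : ∀ᶠ w in nhds ((ξ₀:ℝ):ℂ), AnalyticAt ℂ g w ∧ g w ≠ 0 :=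
    hg.eventually_analyticAt.and (hg.continuousAt.eventually_ne hg0)
  obtain ⟨ε, hεpos, hε⟩ : ∃ ε > 0, ∀ w ∈ ball ((ξ₀:ℝ):ℂ) ε, AnalyticAt ℂ g w ∧ g w ≠ 0 :=
    Metric.eventually_nhds_iff_ball.mp hgev
  have hdg : AnalyticAt ℂ (deriv g) ((ξ₀:ℝ):ℂ) := by
    have hgOn : AnalyticOnNhd ℂ g (ball ((ξ₀:ℝ):ℂ) ε) := fun w hw => (hε w hw).1
    exact hgOn.deriv _ (mem_ball_self hεpos)
  -- |F z|^ψ is small near c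
  have hFcont : Filter.Tendsto F (nhds ((c:ℝ):ℂ)) (nhds 0) := by
    simpa [hFc] using (hFa _ hcball).continuousAt.tendsto
  have habs : Filter.Tendsto (fun z => ‖F z‖ ^ ψ) (nhds ((c:ℝ):ℂ)) (nhds 0) := by
    have h1 : Filter.Tendsto (fun z => ‖F z‖) (nhds ((c:ℝ):ℂ)) (nhds 0) := by
      simpa [Function.comp_def] using (continuous_norm.tendsto 0).comp hFcont
    have h2 : ContinuousAt (fun t : ℝ => t ^ ψ) 0 :=
      Real.continuousAt_rpow_const 0 ψ (Or.inr hψ.le)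
    have h3 := h2.tendsto.comp h1
    simpa [Real.zero_rpow hψ.ne', Function.comp_def] using h3
  obtain ⟨ρ2, hρ2pos, hρ2⟩ : ∃ ρ2 > 0, ∀ z ∈ ball ((c:ℝ):ℂ) ρ2, ‖F z‖ ^ ψ < ε :=
    Metric.eventually_nhds_iff_ball.mp (habs.eventually_lt_const hεpos)
  set ρ : ℝ := min ρ1 (min ρ2 r) with hρdef
  have hρpos : 0 < ρ := lt_min hρ1pos (lt_min hρ2pos hr)
  have hρr : ρ ≤ r := (min_le_right _ _).trans (min_le_right _ _)
  have hρ1' : ρ ≤ ρ1 := min_le_left _ _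
  have hρ2' : ρ ≤ ρ2 := (min_le_right _ _).trans (min_le_left _ _)
  set S : Set ℂ := ball ((c:ℝ):ℂ) ρ ∩ {z : ℂ | 0 < z.im} with hSdef
  have hSopen : IsOpen S := isOpen_ball.inter (isOpen_lt continuous_const Complex.continuous_im)
  have hSl : S ∈ l := by
    rw [hl]
    exact Filter.inter_mem (nhdsWithin_le_nhds (ball_mem_nhds _ hρpos)) self_mem_nhdsWithin
  -- basic pointwise facts on S
  have him : ∀ z ∈ S, 0 < (F z).im := by
    intro z hz
    exact im_pos_lemma F c ρ (hF.mono (ball_subset_ball hρr))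
      (fun ζ hζ => hρ1 ζ (ball_subset_ball hρ1' hζ))
      (fun x hx => hFreal x (ball_subset_ball hρr hx)) z hz.1 hz.2
  have hball_r : ∀ z ∈ S, z ∈ ball ((c:ℝ):ℂ) r := fun z hz => ball_subset_ball hρr hz.1
  have hA0 : ∀ z ∈ S, F z ≠ 0 := by
    intro z hz h
    have h2 := him z hz; rw [h] at h2; simp at h2
  have hslit : ∀ z ∈ S, F z ∈ Complex.slitPlane := fun z hz => Or.inr (him z hz).ne'
  have hB0 : ∀ z ∈ S, deriv F z ≠ 0 := by
    intro z hz h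
    have h2 := hρ1 z (ball_subset_ball hρ1' hz.1); rw [h] at h2; simp at h2
  have hfball : ∀ z ∈ S, f z ∈ ball ((ξ₀:ℝ):ℂ) ε := by
    intro z hz
    rw [mem_ball, hf z, Complex.dist_eq]
    have h3 : (ξ₀:ℂ) + F z ^ ((ψ:ℝ):ℂ) - (ξ₀:ℂ) = F z ^ ((ψ:ℝ):ℂ) := by ring
    rw [h3]
    have h4 := hρ2 z (ball_subset_ball hρ2' hz.1)
    simpa [Complex.norm_cpow_real] using h4
  have hFd : ∀ z ∈ S, HasDerivAt F (deriv F z) z := fun z hz =>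
    ((hFa z (hball_r z hz)).differentiableAt).hasDerivAt
  have hfderiv : ∀ z ∈ S, HasDerivAt f (((ψ:ℝ):ℂ) * F z ^ (((ψ:ℝ):ℂ)-1) * deriv F z) z := by
    intro z hz
    have h := (HasDerivAt.cpow_const (c := ((ψ:ℝ):ℂ)) (hFd z hz) (hslit z hz)).const_add (ξ₀:ℂ)
    have hfe : f = fun z => (ξ₀:ℂ) + F z ^ ((ψ:ℝ):ℂ) := funext hf
    rw [hfe]; exact h
  have hdf : ∀ z ∈ S, deriv f z = ((ψ:ℝ):ℂ) * F z ^ (((ψ:ℝ):ℂ)-1) * deriv F z :=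
    fun z hz => (hfderiv z hz).deriv
  have hFd2 : ∀ z ∈ S, HasDerivAt (deriv F) (deriv (deriv F) z) z := fun z hz =>
    ((hF1a z (hball_r z hz)).differentiableAt).hasDerivAt
  have hddf : ∀ z ∈ S, deriv (deriv f) z =
      ((ψ:ℝ):ℂ) * ((((ψ:ℝ):ℂ)-1) * F z ^ ((((ψ:ℝ):ℂ)-1)-1) * deriv F z) * deriv F z
        + ((ψ:ℝ):ℂ) * F z ^ (((ψ:ℝ):ℂ)-1) * deriv (deriv F) z := by
    intro z hz
    have hev : deriv f =ᶠ[nhds z] (fun w => ((ψ:ℝ):ℂ) * F w ^ (((ψ:ℝ):ℂ)-1) * deriv F w) :=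
      Filter.eventually_of_mem (hSopen.mem_nhds hz) hdf
    rw [hev.deriv_eq]
    have h1 : HasDerivAt (fun w => F w ^ (((ψ:ℝ):ℂ)-1))
        ((((ψ:ℝ):ℂ)-1) * F z ^ ((((ψ:ℝ):ℂ)-1)-1) * deriv F z) z :=
      (hFd z hz).cpow_const (hslit z hz)
    have h2 := ((h1.const_mul (((ψ:ℝ):ℂ))).mul (hFd2 z hz)).deriv
    exact h2
  have hQd : ∀ w ∈ ball ((ξ₀:ℝ):ℂ) ε, deriv Q w
      = ((N:ℂ) * (w - (ξ₀:ℂ)) ^ (N-1) * 1) * g w + (w - (ξ₀:ℂ)) ^ N * deriv g w := by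
    intro w hw
    have hQe : Q = fun w => (w - (ξ₀:ℂ)) ^ N * g w := funext hQ
    rw [hQe]
    have h1 : HasDerivAt (fun w : ℂ => (w - (ξ₀:ℂ)) ^ N) ((N:ℂ) * (w - (ξ₀:ℂ)) ^ (N-1) * 1) w :=
      ((hasDerivAt_id w).sub_const _).pow N
    have h2 : HasDerivAt g (deriv g w) w := (hε w hw).1.differentiableAt.hasDerivAt
    exact (h1.mul h2).deriv
  have hμ : (((ψ * ((N:ℝ) + 2) - 2 : ℝ)) : ℂ) = ((ψ:ℝ):ℂ) * ((N:ℂ) + 2) - 2 := by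
    push_cast; ring
  set T : ℂ → ℂ := fun z => (z - ((c:ℝ):ℂ)) * deriv F z / F z with hT
  set L : ℂ → ℂ := fun z =>
    (((ψ:ℝ):ℂ) * ((N:ℂ) + 2) - 2) * T z
    + ((ψ:ℝ):ℂ) * F z ^ ((ψ:ℝ):ℂ) * T z * (deriv g (f z) / g (f z))
    + 2 * (z - ((c:ℝ):ℂ)) * (deriv (deriv F) z / deriv F z) with hL
  have heq : ∀ z ∈ S, (z - ((c:ℝ):ℂ)) * ((deriv Q (f z) / Q (f z)) * deriv f z
      + 2 * deriv (deriv f) z / deriv f z) = L z := by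
    intro z hz
    have hA := hA0 z hz
    have hB := hB0 z hz
    have hgf : g (f z) ≠ 0 := (hε _ (hfball z hz)).2
    have ha0 : ((ψ:ℝ):ℂ) ≠ 0 := by
      simpa using Complex.ofReal_ne_zero.mpr hψ.ne'
    have hv0 : F z ^ ((((ψ:ℝ):ℂ)-1)-1) ≠ 0 :=
      fun h => hA ((Complex.cpow_eq_zero_iff _ _).mp h).1
    set v : ℂ := F z ^ ((((ψ:ℝ):ℂ)-1)-1) with hv
    have hu : F z ^ (((ψ:ℝ):ℂ)-1) = v * F z := by
      rw [show (((ψ:ℝ):ℂ)-1) = ((((ψ:ℝ):ℂ)-1)-1) + 1 by ring,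
        Complex.cpow_add _ _ hA, Complex.cpow_one, hv]
    have hP : F z ^ ((ψ:ℝ):ℂ) = v * F z * F z := by
      rw [show ((ψ:ℝ):ℂ) = (((ψ:ℝ):ℂ)-1) + 1 by ring,
        Complex.cpow_add _ _ hA, Complex.cpow_one, hu]
    have hfz : f z - (ξ₀:ℂ) = v * F z * F z := by rw [hf z, ← hP]; ring
    have hvAA : v * F z * F z ≠ 0 := mul_ne_zero (mul_ne_zero hv0 hA) hA
    have hPN : (v * F z * F z) ^ N ≠ 0 := pow_ne_zero _ hvAA
    rw [hdf z hz, hddf z hz, hQd (f z) (hfball z hz), hQ (f z), hfz, hu,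
      natmul_pow_div hvAA, hL]
    simp only [hT]
    rw [← hv, hP]
    set W : ℂ := (v * F z * F z) ^ N with hW
    clear_value W
    have hvAA' : v * F z * F z ≠ 0 := hvAA
    have t1 : ((N:ℂ) * W / (v * F z * F z) * 1 * g (f z) + W * deriv g (f z)) / (W * g (f z))
        = (N:ℂ) / (v * F z * F z) + deriv g (f z) / g (f z) := by
      rw [div_eq_iff (mul_ne_zero hPN hgf)]
      field_simp
    have t2 : 2 * (((ψ:ℝ):ℂ) * ((((ψ:ℝ):ℂ) - 1) * v * deriv F z) * deriv F z
          + ((ψ:ℝ):ℂ) * (v * F z) * deriv (deriv F) z) / (((ψ:ℝ):ℂ) * (v * F z) * deriv F z)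
        = 2 * (((ψ:ℝ):ℂ) - 1) * deriv F z / F z + 2 * deriv (deriv F) z / deriv F z := by
      rw [div_eq_iff (mul_ne_zero (mul_ne_zero ha0 (mul_ne_zero hv0 hA)) hB)]
      field_simp
    rw [t1, t2]
    rw [div_add_div _ _ hvAA' hgf]
    rw [div_add_div _ _ hA hB]
    rw [div_mul_eq_mul_div, ← mul_div_assoc]
    rw [div_add_div _ _ (mul_ne_zero hvAA' hgf) (mul_ne_zero hA hB)]
    rw [mul_div_assoc']
    rw [div_eq_iff (mul_ne_zero (mul_ne_zero hvAA' hgf) (mul_ne_zero hA hB))]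
    field_simp
    ring
  -- limits
  have hlne : l ≤ nhdsWithin ((c:ℝ):ℂ) {((c:ℝ):ℂ)}ᶜ := by
    rw [hl]
    refine nhdsWithin_mono _ ?_
    intro z hz hzc
    rw [Set.mem_singleton_iff] at hzc
    rw [hzc] at hz
    simp at hz
  have hslope : Filter.Tendsto (fun z => F z / (z - ((c:ℝ):ℂ))) l (nhds ((d:ℝ):ℂ)) := by
    have hd : HasDerivAt F ((d:ℝ):ℂ) ((c:ℝ):ℂ) := by
      have h := (hFa _ hcball).differentiableAt.hasDerivAt; rwa [hdF] at h
    have h1 := hasDerivAt_iff_tendsto_slope.mp hd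
    have h2 : Filter.Tendsto (slope F ((c:ℝ):ℂ)) l (nhds ((d:ℝ):ℂ)) := h1.mono_left hlne
    refine h2.congr ?_
    intro z
    rw [slope_def_field, hFc, sub_zero]
  have hBt : Filter.Tendsto (fun z => deriv F z) l (nhds ((d:ℝ):ℂ)) := by
    have h := (hF1a _ hcball).continuousAt.tendsto
    rw [hdF] at h
    exact h.mono_left nhdsWithin_le_nhds
  have hd0' : ((d:ℝ):ℂ) ≠ 0 := by
    simpa using Complex.ofReal_ne_zero.mpr hd0.ne'
  have hTt : Filter.Tendsto T l (nhds 1) := by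
    have h1 : Filter.Tendsto (fun z => (z - ((c:ℝ):ℂ)) / F z) l (nhds ((d:ℝ):ℂ)⁻¹) := by
      have h2 := hslope.inv₀ hd0'
      refine h2.congr ?_
      intro z
      rw [inv_div]
    have h3 := h1.mul hBt
    rw [inv_mul_cancel₀ hd0'] at h3
    refine h3.congr ?_
    intro z
    simp only [hT]
    ring
  have hPt : Filter.Tendsto (fun z => F z ^ ((ψ:ℝ):ℂ)) l (nhds 0) := by
    rw [tendsto_zero_iff_norm_tendsto_zero]
    have h1 : ∀ z : ℂ, ‖F z ^ ((ψ:ℝ):ℂ)‖ = ‖F z‖ ^ ψ := fun z => by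
      rw [Complex.norm_cpow_real]
    simp only [h1]
    exact habs.mono_left nhdsWithin_le_nhds
  have hft : Filter.Tendsto f l (nhds ((ξ₀:ℝ):ℂ)) := by
    have hfe : f = fun z => (ξ₀:ℂ) + F z ^ ((ψ:ℝ):ℂ) := funext hf
    rw [hfe]
    simpa using (hPt.const_add ((ξ₀:ℝ):ℂ))
  have hGt : Filter.Tendsto (fun z => deriv g (f z) / g (f z)) l
      (nhds (deriv g ((ξ₀:ℝ):ℂ) / g ((ξ₀:ℝ):ℂ))) :=
    (hdg.continuousAt.tendsto.comp hft).div (hg.continuousAt.tendsto.comp hft) hg0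
  have hCt : Filter.Tendsto (fun z => deriv (deriv F) z / deriv F z) l
      (nhds (deriv (deriv F) ((c:ℝ):ℂ) / ((d:ℝ):ℂ))) :=
    (((hF2a _ hcball).continuousAt.tendsto).mono_left nhdsWithin_le_nhds).div hBt hd0'
  have hzc : Filter.Tendsto (fun z : ℂ => z - ((c:ℝ):ℂ)) l (nhds 0) := by
    have h : Filter.Tendsto (fun z : ℂ => z - ((c:ℝ):ℂ)) (nhds ((c:ℝ):ℂ)) (nhds 0) := by
      have h0 := ((continuous_id.sub continuous_const).tendsto ((c:ℝ):ℂ) :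
        Filter.Tendsto (fun z : ℂ => z - ((c:ℝ):ℂ)) (nhds ((c:ℝ):ℂ)) (nhds (((c:ℝ):ℂ) - ((c:ℝ):ℂ))))
      have h1 : Filter.Tendsto (fun z : ℂ => z - ((c:ℝ):ℂ)) (nhds ((c:ℝ):ℂ)) (nhds (((c:ℝ):ℂ) - ((c:ℝ):ℂ))) := h0
      rw [sub_self] at h1; exact h1
    exact h.mono_left nhdsWithin_le_nhds
  have hLt : Filter.Tendsto L l (nhds (((ψ:ℝ):ℂ) * ((N:ℂ)+2) - 2)) := by
    rw [hL]
    have h1 := ((hPt.const_mul ((ψ:ℝ):ℂ)).mul hTt).mul hGt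
    have h2 := (hzc.const_mul (2:ℂ)).mul hCt
    have h3 := hTt.const_mul (((ψ:ℝ):ℂ) * ((N:ℂ)+2) - 2)
    have h4 := (h3.add h1).add h2
    simpa using h4
  rw [hμ]
  exact hLt.congr' (Filter.eventually_of_mem hSl (fun z hz => (heq z hz).symm))
end
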